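/- arXiv:2312.09021 — 9 statements merged into one kernel-verified Lean document; each statement's English description precedes it below -/
import Mathlib

section
/- Let q be a squarefree positive integer and k ≥ 1 an integer. Then Σ_{r_1,...,r_k} (∏_{i=1}^k μ(r_i)²/φ(r_i)) · #{(b_1,...,b_k) : 1 ≤ b_i ≤ r_i, gcd(b_i,r_i) = 1 for all i, and b_1/r_1 + ⋯ + b_k/r_k ∈ ℤ} ≤ ∏_{p|q} (1 + 2^k/(p−1)), where the outer sum is over all k-tuples (r_1,...,r_k) of positive divisors of q, and the product on the right is over primes p dividing q. -/
open scoped Classical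
open Finset
set_option maxHeartbeats 1000000

private lemma coprime_prod_primes {s : Finset ℕ} (hs : ∀ p ∈ s, p.Prime) {p : ℕ}
    (hp : p.Prime) (hps : p ∉ s) : Nat.Coprime p (∏ x ∈ s, x) :=
  Nat.Coprime.prod_right fun q hq =>
    (Nat.coprime_primes hp (hs q hq)).2 (by rintro rfl; exact hps hq)

private lemma totient_prod_primes {s : Finset ℕ} (hs : ∀ p ∈ s, p.Prime) :
    Nat.totient (∏ p ∈ s, p) = ∏ p ∈ s, (p - 1) := by
  induction s using Finset.induction_on with
  | empty => simp
  | @insert p s hps ih =>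
    have hp := hs p (mem_insert_self p s)
    have hs' : ∀ q ∈ s, Nat.Prime q := fun q hq => hs q (mem_insert_of_mem hq)
    rw [prod_insert hps, prod_insert hps, Nat.totient_mul (coprime_prod_primes hs' hp hps),
      Nat.totient_prime hp, ih hs']

private lemma prod_primes_dvd_nat {s : Finset ℕ} (hs : ∀ p ∈ s, p.Prime) {n : ℕ}
    (h : ∀ p ∈ s, p ∣ n) : (∏ p ∈ s, p) ∣ n := by
  induction s using Finset.induction_on with
  | empty => simpa using one_dvd n
  | @insert p s hps ih =>
    have hp := hs p (mem_insert_self p s)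
    have hs' : ∀ q ∈ s, Nat.Prime q := fun q hq => hs q (mem_insert_of_mem hq)
    rw [prod_insert hps]
    exact (coprime_prod_primes hs' hp hps).mul_dvd_of_dvd_of_dvd
      (h p (mem_insert_self p s)) (ih hs' fun q hq => h q (mem_insert_of_mem hq))

private lemma prod_primes_dvd_int {s : Finset ℕ} (hs : ∀ p ∈ s, p.Prime) {n : ℤ}
    (h : ∀ p ∈ s, (p : ℤ) ∣ n) : ((∏ p ∈ s, p : ℕ) : ℤ) ∣ n := by
  induction s using Finset.induction_on with
  | empty => simpa using one_dvd n
  | @insert p s hps ih =>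
    have hp := hs p (mem_insert_self p s)
    have hs' : ∀ q ∈ s, Nat.Prime q := fun q hq => hs q (mem_insert_of_mem hq)
    rw [prod_insert hps, Nat.cast_mul]
    exact (Nat.isCoprime_iff_coprime.mpr (coprime_prod_primes hs' hp hps)).mul_dvd
      (h p (mem_insert_self p s)) (ih hs' fun q hq => h q (mem_insert_of_mem hq))

private lemma stepA (q : ℕ) (hq : Squarefree q) (hq0 : 0 < q) (k : ℕ) (hk : 1 ≤ k)
    (r : Fin k → ℕ) (hr : ∀ i, r i ∣ q) :
    ((Fintype.piFinset fun i => Finset.Icc 1 (r i)).filter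
          (fun b => (∀ i, Nat.gcd (b i) (r i) = 1) ∧
            ∃ z : ℤ, ∑ i, (b i : ℚ) / (r i : ℚ) = (z : ℚ))).card
      * ∏ p ∈ q.primeFactors.filter (fun p => ∃ i, p ∣ r i), (p - 1)
    ≤ ∏ i, Nat.totient (r i) := by
  have hr0 : ∀ i, 0 < r i := fun i => Nat.pos_of_dvd_of_pos (hr i) hq0
  have hsf : ∀ i, Squarefree (r i) := fun i => hq.squarefree_of_dvd (hr i)
  set Pr := q.primeFactors.filter (fun p => ∃ i, p ∣ r i) with hPr
  have hPrP : ∀ p ∈ Pr, p.Prime := fun p hp =>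
    Nat.prime_of_mem_primeFactors (mem_filter.mp hp).1
  set ip : ℕ → Fin k := fun p => if h : ∃ i, p ∣ r i then h.choose else ⟨0, hk⟩ with hipdef
  have hip : ∀ p ∈ Pr, p ∣ r (ip p) := by
    intro p hp
    obtain ⟨-, h⟩ := mem_filter.mp hp
    simp only [hipdef, dif_pos h]
    exact h.choose_spec
  set d : Fin k → ℕ := fun i => ∏ p ∈ Pr.filter (fun p => ip p = i), p with hddef
  have hfibP : ∀ i : Fin k, ∀ p ∈ Pr.filter (fun p => ip p = i), p.Prime := fun i p hp =>
    hPrP p (mem_filter.mp hp).1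
  have hdd : ∀ i, d i ∣ r i := by
    intro i
    refine prod_primes_dvd_nat (hfibP i) fun p hp => ?_
    obtain ⟨hp1, hp2⟩ := mem_filter.mp hp
    exact hp2 ▸ hip p hp1
  set m : Fin k → ℕ := fun i => r i / d i with hmdef
  have hmd : ∀ i, d i * m i = r i := fun i => Nat.mul_div_cancel' (hdd i)
  have hcop : ∀ i, Nat.Coprime (d i) (m i) := by
    intro i
    have : Squarefree (d i * m i) := (hmd i).symm ▸ hsf i
    exact (Nat.squarefree_mul_iff.mp this).1
  have hd0 : ∀ i, 0 < d i := fun i => Finset.prod_pos fun p hp => (hfibP i p hp).pos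
  have hm0 : ∀ i, 0 < m i := fun i => Nat.div_pos (Nat.le_of_dvd (hr0 i) (hdd i)) (hd0 i)
  set B := (Fintype.piFinset fun i => Finset.Icc 1 (r i)).filter
      (fun b => (∀ i, Nat.gcd (b i) (r i) = 1) ∧
        ∃ z : ℤ, ∑ i, (b i : ℚ) / (r i : ℚ) = (z : ℚ)) with hB
  -- injectivity of reduction mod m i
  have key : ∀ b ∈ B, ∀ b' ∈ B, (∀ i, b i % m i = b' i % m i) → b = b' := by
    intro b hb b' hb' hbb
    rw [hB, mem_filter] at hb hb'
    obtain ⟨hbp, hbg, z, hz⟩ := hb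
    obtain ⟨hbp', hbg', z', hz'⟩ := hb'
    have hbIcc : ∀ i, b i ∈ Finset.Icc 1 (r i) := fun i => Fintype.mem_piFinset.mp hbp i
    have hbIcc' : ∀ i, b' i ∈ Finset.Icc 1 (r i) := fun i => Fintype.mem_piFinset.mp hbp' i
    have hne : ∀ i, ((r i : ℚ)) ≠ 0 := fun i => Nat.cast_ne_zero.mpr (hr0 i).ne'
    have hcast : ∀ i, ((q / r i : ℕ) : ℚ) = (q : ℚ) / (r i : ℚ) := fun i =>
      Nat.cast_div (hr i) (hne i)
    have hZ : ∀ (c : Fin k → ℕ) (w : ℤ), (∑ i, (c i : ℚ) / (r i : ℚ) = (w : ℚ)) →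
        (∑ i, (c i : ℤ) * ((q / r i : ℕ) : ℤ) = w * q) := by
      intro c w hw
      have e1 : ∑ i, ((c i : ℚ)) * ((q / r i : ℕ) : ℚ) = (w : ℚ) * (q : ℚ) := by
        rw [show (w : ℚ) * q = (q : ℚ) * w from mul_comm _ _, ← hw, Finset.mul_sum]
        refine Finset.sum_congr rfl fun i _ => ?_
        rw [hcast i]; ring
      have e2 : ((∑ i, (c i : ℤ) * ((q / r i : ℕ) : ℤ) : ℤ) : ℚ) = ((w * q : ℤ) : ℚ) := by
        push_cast [-Int.natCast_div]
        exact e1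
      exact Int.cast_injective e2
    have hZb := hZ b z hz
    have hZb' := hZ b' z' hz'
    have hnotdvd : ∀ p ∈ Pr, ∀ j, ip p ≠ j → p ∣ r j → p ∣ m j := by
      intro p hp j hij hprj
      have hpP := hPrP p hp
      have hpd : ¬ p ∣ d j := by
        intro hpd
        obtain ⟨p', hp', hpp'⟩ := (hpP.prime.dvd_finset_prod_iff _).mp hpd
        have : p = p' := (Nat.prime_dvd_prime_iff_eq hpP (hfibP j p' hp')).mp hpp'
        exact hij (this ▸ (mem_filter.mp hp').2)
      rw [← hmd j] at hprj
      exact (hpP.dvd_mul.mp hprj).resolve_left hpd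
    have hmodp : ∀ p ∈ Pr, b (ip p) ≡ b' (ip p) [MOD p] := by
      intro p hp
      have hpP := hPrP p hp
      haveI : Fact p.Prime := ⟨hpP⟩
      have hpq : p ∣ q := Nat.dvd_of_mem_primeFactors (mem_filter.mp hp).1
      have cast0 : ((q : ℕ) : ZMod p) = 0 := (ZMod.natCast_eq_zero_iff _ _).mpr hpq
      have hce : ∀ (c : Fin k → ℕ) (w : ℤ), (∑ i, (c i : ℤ) * ((q / r i : ℕ) : ℤ) = w * q) →
          ∑ j ∈ univ.filter (fun j => p ∣ r j), (c j : ZMod p) * ((q / r j : ℕ) : ZMod p)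
            = 0 := by
        intro c w hw
        have hcc := congrArg (fun t : ℤ => (t : ZMod p)) hw
        simp only [Int.cast_sum, Int.cast_mul, Int.cast_natCast] at hcc
        rw [cast0, mul_zero] at hcc
        rw [Finset.sum_filter_of_ne]
        · exact hcc
        · intro j _ hj
          by_contra hnd
          have hdq : p ∣ q / r j := by
            have h1 : p ∣ (q / r j) * r j := by rw [Nat.div_mul_cancel (hr j)]; exact hpq
            exact (hpP.dvd_mul.mp h1).resolve_right hnd
          exact hj (by rw [(ZMod.natCast_eq_zero_iff _ _).mpr hdq, mul_zero])
      have h1 := hce b z hZb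
      have h2 := hce b' z' hZb'
      have hi₀ : ip p ∈ univ.filter (fun j => p ∣ r j) :=
        mem_filter.mpr ⟨mem_univ _, hip p hp⟩
      rw [← Finset.add_sum_erase _ _ hi₀] at h1 h2
      have hrest : ∑ j ∈ (univ.filter (fun j => p ∣ r j)).erase (ip p),
            (b j : ZMod p) * ((q / r j : ℕ) : ZMod p)
          = ∑ j ∈ (univ.filter (fun j => p ∣ r j)).erase (ip p),
            (b' j : ZMod p) * ((q / r j : ℕ) : ZMod p) := by
        refine Finset.sum_congr rfl fun j hj => ?_
        obtain ⟨hji, hjf⟩ := Finset.mem_erase.mp hj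
        have hjr : p ∣ r j := (mem_filter.mp hjf).2
        have hpm : p ∣ m j := hnotdvd p hp j (Ne.symm hji) hjr
        have hmm : b j ≡ b' j [MOD p] := (Nat.ModEq.of_dvd hpm (hbb j))
        rw [(ZMod.natCast_eq_natCast_iff _ _ _).mpr hmm]
      rw [hrest] at h1
      have hcancel : (b (ip p) : ZMod p) * ((q / r (ip p) : ℕ) : ZMod p)
          = (b' (ip p) : ZMod p) * ((q / r (ip p) : ℕ) : ZMod p) :=
        add_right_cancel (h1.trans h2.symm)
      have hu : ((q / r (ip p) : ℕ) : ZMod p) ≠ 0 := by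
        rw [Ne, ZMod.natCast_eq_zero_iff]
        intro hdvd
        have hpp : p * p ∣ q := by
          have hmm := mul_dvd_mul hdvd (hip p hp)
          rwa [Nat.div_mul_cancel (hr (ip p))] at hmm
        exact hpP.prime.not_unit (hq p hpp)
      exact (ZMod.natCast_eq_natCast_iff _ _ _).mp (mul_right_cancel₀ hu hcancel)
    funext i
    have hdint : ((d i : ℕ) : ℤ) ∣ (b i : ℤ) - b' i := by
      refine prod_primes_dvd_int (hfibP i) fun p hp => ?_
      have h1 := hmodp p (mem_filter.mp hp).1
      rw [(mem_filter.mp hp).2] at h1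
      exact h1.symm.dvd
    have hmm : b i ≡ b' i [MOD m i] := hbb i
    have hmint : ((m i : ℕ) : ℤ) ∣ (b i : ℤ) - b' i := hmm.symm.dvd
    have hri : ((r i : ℕ) : ℤ) ∣ (b i : ℤ) - b' i := by
      rw [← hmd i, Nat.cast_mul]
      exact (Nat.isCoprime_iff_coprime.mpr (hcop i)).mul_dvd hdint hmint
    have h1 := Finset.mem_Icc.mp (hbIcc i)
    have h2 := Finset.mem_Icc.mp (hbIcc' i)
    have hlt : |(b i : ℤ) - b' i| < (r i : ℤ) := by
      rw [abs_lt]; omega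
    have h0 := Int.eq_zero_of_abs_lt_dvd hri hlt
    omega
  have hcard : B.card ≤ ∏ i, Nat.totient (m i) := by
    have hle : B.card ≤ (Fintype.piFinset fun i =>
        (range (m i)).filter ((m i).Coprime)).card := by
      apply Finset.card_le_card_of_injOn (fun b i => b i % m i)
      · intro b hb
        rw [Finset.mem_coe, Fintype.mem_piFinset]
        intro i
        rw [Finset.mem_coe, hB, mem_filter] at hb
        obtain ⟨hbp, hbg, -⟩ := hb
        refine mem_filter.mpr ⟨mem_range.mpr (Nat.mod_lt _ (hm0 i)), ?_⟩
        have h1 : Nat.Coprime (b i) (r i) := hbg i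
        have h2 : Nat.Coprime (b i) (m i) :=
          h1.coprime_dvd_right (Nat.div_dvd_of_dvd (hdd i))
        have h3 : Nat.Coprime (b i % m i) (m i) := by
          unfold Nat.Coprime
          rw [← Nat.gcd_rec]
          exact Nat.coprime_comm.mp h2
        exact Nat.coprime_comm.mp h3
      · intro b hb b' hb' hfe
        exact key b hb b' hb' fun i => congrFun hfe i
    calc B.card ≤ _ := hle
      _ = ∏ i, Nat.totient (m i) := by
        rw [Fintype.card_piFinset]
        exact Finset.prod_congr rfl fun i _ => (Nat.totient_eq_card_coprime (m i)).symm
  calc B.card * ∏ p ∈ Pr, (p - 1)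
      = B.card * ∏ i, ∏ p ∈ Pr.filter (fun p => ip p = i), (p - 1) := by
        rw [Finset.prod_fiberwise_of_maps_to (fun p _ => mem_univ (ip p))]
    _ = B.card * ∏ i, Nat.totient (d i) := by
        congr 1
        exact Finset.prod_congr rfl fun i _ => (totient_prod_primes (hfibP i)).symm
    _ ≤ (∏ i, Nat.totient (m i)) * ∏ i, Nat.totient (d i) :=
        Nat.mul_le_mul_right _ hcard
    _ = ∏ i, Nat.totient (r i) := by
        rw [← Finset.prod_mul_distrib]
        refine Finset.prod_congr rfl fun i _ => ?_
        rw [← Nat.totient_mul (hcop i).symm, mul_comm (m i) (d i), hmd i]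

private noncomputable def Wfun (k p : ℕ) (T : Finset (Fin k)) : ℝ := if T = ∅ then 1 else ((p : ℝ) - 1)⁻¹

theorem bounds_on_r_i_sums_no_Fs (q : ℕ) (hq : Squarefree q) (hq0 : 0 < q)
    (k : ℕ) (hk : 1 ≤ k) :
    ∑ r ∈ Fintype.piFinset (fun _ : Fin k => q.divisors),
      (∏ i, ((ArithmeticFunction.moebius (r i) : ℝ) ^ 2 / (Nat.totient (r i) : ℝ))) *
        (((Fintype.piFinset fun i => Finset.Icc 1 (r i)).filter
          (fun b => (∀ i, Nat.gcd (b i) (r i) = 1) ∧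
            ∃ z : ℤ, ∑ i, (b i : ℚ) / (r i : ℚ) = (z : ℚ))).card : ℝ)
    ≤ ∏ p ∈ q.primeFactors, (1 + 2 ^ k / ((p : ℝ) - 1)) := by
  classical
  have hPp : ∀ p ∈ q.primeFactors, (1:ℝ) ≤ (p : ℝ) - 1 := by
    intro p hp
    have h2 := (Nat.prime_of_mem_primeFactors hp).two_le
    have : (2:ℝ) ≤ p := by exact_mod_cast h2
    linarith
  -- Step 1: termwise bound
  have hterm : ∀ r ∈ Fintype.piFinset (fun _ : Fin k => q.divisors),
      (∏ i, ((ArithmeticFunction.moebius (r i) : ℝ) ^ 2 / (Nat.totient (r i) : ℝ))) *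
        (((Fintype.piFinset fun i => Finset.Icc 1 (r i)).filter
          (fun b => (∀ i, Nat.gcd (b i) (r i) = 1) ∧
            ∃ z : ℤ, ∑ i, (b i : ℚ) / (r i : ℚ) = (z : ℚ))).card : ℝ)
      ≤ ∏ p ∈ q.primeFactors, (if ∃ i, p ∣ r i then ((p : ℝ) - 1)⁻¹ else 1) := by
    intro r hrs
    have hr : ∀ i, r i ∣ q := fun i =>
      Nat.dvd_of_mem_divisors (Fintype.mem_piFinset.mp hrs i)
    have hsf : ∀ i, Squarefree (r i) := fun i => hq.squarefree_of_dvd (hr i)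
    have hr0 : ∀ i, 0 < r i := fun i => Nat.pos_of_dvd_of_pos (hr i) hq0
    have hmu : ∀ i, ((ArithmeticFunction.moebius (r i) : ℝ)) ^ 2 = 1 := by
      intro i
      have h1 : (ArithmeticFunction.moebius (r i)) ^ 2 = 1 := by
        rw [ArithmeticFunction.moebius_apply_of_squarefree (hsf i), ← pow_mul,
          mul_comm, pow_mul]
        norm_num
      calc ((ArithmeticFunction.moebius (r i) : ℝ)) ^ 2
          = ((ArithmeticFunction.moebius (r i) ^ 2 : ℤ) : ℝ) := by push_cast; ring
        _ = 1 := by rw [h1]; norm_num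
    have hΦ : (0:ℝ) < ∏ i, (Nat.totient (r i) : ℝ) :=
      Finset.prod_pos fun i _ => by
        exact_mod_cast Nat.totient_pos.mpr (hr0 i)
    have hPrP : ∀ p ∈ q.primeFactors.filter (fun p => ∃ i, p ∣ r i), p.Prime :=
      fun p hp => Nat.prime_of_mem_primeFactors (Finset.mem_filter.mp hp).1
    have hA : (0:ℝ) < ∏ p ∈ q.primeFactors.filter (fun p => ∃ i, p ∣ r i), ((p:ℝ) - 1) :=
      Finset.prod_pos fun p hp => by
        have := hPp p (Finset.mem_filter.mp hp).1; linarith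
    have hstep := stepA q hq hq0 k hk r hr
    have hstepR : (((Fintype.piFinset fun i => Finset.Icc 1 (r i)).filter
          (fun b => (∀ i, Nat.gcd (b i) (r i) = 1) ∧
            ∃ z : ℤ, ∑ i, (b i : ℚ) / (r i : ℚ) = (z : ℚ))).card : ℝ)
          * ∏ p ∈ q.primeFactors.filter (fun p => ∃ i, p ∣ r i), ((p:ℝ) - 1)
        ≤ ∏ i, (Nat.totient (r i) : ℝ) := by
      have hcast := (Nat.cast_le (α := ℝ)).mpr hstep
      push_cast at hcast
      rw [show (∏ p ∈ q.primeFactors.filter (fun p => ∃ i, p ∣ r i), ((p:ℝ) - 1))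
          = ∏ p ∈ q.primeFactors.filter (fun p => ∃ i, p ∣ r i), (((p - 1 : ℕ)) : ℝ) from
        Finset.prod_congr rfl fun p hp => by
          rw [Nat.cast_sub (hPrP p hp).one_lt.le]; norm_num]
      exact_mod_cast hcast
    have hprodeq : (∏ i, ((ArithmeticFunction.moebius (r i) : ℝ) ^ 2 / (Nat.totient (r i) : ℝ)))
        = (∏ i, (Nat.totient (r i) : ℝ))⁻¹ := by
      rw [← Finset.prod_inv_distrib]
      exact Finset.prod_congr rfl fun i _ => by rw [hmu i, one_div]
    rw [hprodeq, ← Finset.prod_filter, Finset.prod_inv_distrib, mul_comm,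
      ← div_eq_mul_inv, ← one_div, div_le_div_iff₀ hΦ hA, one_mul]
    exact hstepR
  -- Step 2: summing the bound
  have hsum : ∑ r ∈ Fintype.piFinset (fun _ : Fin k => q.divisors),
      ∏ p ∈ q.primeFactors, (if ∃ i, p ∣ r i then ((p : ℝ) - 1)⁻¹ else 1)
      ≤ ∏ p ∈ q.primeFactors, (1 + 2 ^ k / ((p : ℝ) - 1)) := by
    have hident : ∀ r : Fin k → ℕ,
        ∏ p ∈ q.primeFactors, (if ∃ i, p ∣ r i then ((p : ℝ) - 1)⁻¹ else 1)
        = ∏ p : {x // x ∈ q.primeFactors},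
            Wfun k p (Finset.univ.filter (fun i => (p : ℕ) ∣ r i)) := by
      intro r
      rw [Finset.univ_eq_attach, ← Finset.prod_attach q.primeFactors
        (fun p => if ∃ i, p ∣ r i then ((p : ℝ) - 1)⁻¹ else 1)]
      refine Finset.prod_congr rfl fun p _ => ?_
      unfold Wfun
      by_cases h : ∃ i, (p : ℕ) ∣ r i
      · obtain ⟨i, hi⟩ := h
        rw [if_pos ⟨i, hi⟩, if_neg (Finset.ne_empty_of_mem
          (Finset.mem_filter.mpr ⟨Finset.mem_univ i, hi⟩))]
      · rw [if_neg h, if_pos (Finset.filter_eq_empty_iff.mpr fun i _ hdvd => h ⟨i, hdvd⟩)]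
    have hinj : ∀ r ∈ Fintype.piFinset (fun _ : Fin k => q.divisors),
        ∀ r' ∈ Fintype.piFinset (fun _ : Fin k => q.divisors),
        ((fun (r : Fin k → ℕ) (p : {x // x ∈ q.primeFactors}) =>
          Finset.univ.filter (fun i => (p : ℕ) ∣ r i)) r
        = (fun (r : Fin k → ℕ) (p : {x // x ∈ q.primeFactors}) =>
          Finset.univ.filter (fun i => (p : ℕ) ∣ r i)) r') → r = r' := by
      intro r hrs r' hrs' hFe
      have hr : ∀ i, r i ∣ q := fun i =>
        Nat.dvd_of_mem_divisors (Fintype.mem_piFinset.mp hrs i)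
      have hr' : ∀ i, r' i ∣ q := fun i =>
        Nat.dvd_of_mem_divisors (Fintype.mem_piFinset.mp hrs' i)
      have hr0 : ∀ i, 0 < r i := fun i => Nat.pos_of_dvd_of_pos (hr i) hq0
      have hr0' : ∀ i, 0 < r' i := fun i => Nat.pos_of_dvd_of_pos (hr' i) hq0
      funext i
      have hpf : (r i).primeFactors = (r' i).primeFactors := by
        ext p
        simp only [Nat.mem_primeFactors]
        constructor
        · rintro ⟨hp, hpd, -⟩
          have hpP : p ∈ q.primeFactors :=
            Nat.mem_primeFactors.mpr ⟨hp, hpd.trans (hr i), hq0.ne'⟩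
          have hmem : i ∈ Finset.univ.filter (fun j => p ∣ r j) :=
            Finset.mem_filter.mpr ⟨Finset.mem_univ _, hpd⟩
          rw [show Finset.univ.filter (fun j => p ∣ r j)
              = Finset.univ.filter (fun j => p ∣ r' j) from congrFun hFe ⟨p, hpP⟩] at hmem
          exact ⟨hp, (Finset.mem_filter.mp hmem).2, (hr0' i).ne'⟩
        · rintro ⟨hp, hpd, -⟩
          have hpP : p ∈ q.primeFactors :=
            Nat.mem_primeFactors.mpr ⟨hp, hpd.trans (hr' i), hq0.ne'⟩
          have hmem : i ∈ Finset.univ.filter (fun j => p ∣ r' j) :=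
            Finset.mem_filter.mpr ⟨Finset.mem_univ _, hpd⟩
          rw [show Finset.univ.filter (fun j => p ∣ r' j)
              = Finset.univ.filter (fun j => p ∣ r j) from (congrFun hFe ⟨p, hpP⟩).symm] at hmem
          exact ⟨hp, (Finset.mem_filter.mp hmem).2, (hr0 i).ne'⟩
      rw [← Nat.prod_primeFactors_of_squarefree (hq.squarefree_of_dvd (hr i)), hpf,
        Nat.prod_primeFactors_of_squarefree (hq.squarefree_of_dvd (hr' i))]
    have hW0 : ∀ (p : {x // x ∈ q.primeFactors}) (T : Finset (Fin k)), 0 ≤ Wfun k p T := by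
      intro p T
      unfold Wfun
      split
      · norm_num
      · have := hPp p p.2
        positivity
    calc ∑ r ∈ Fintype.piFinset (fun _ : Fin k => q.divisors),
          ∏ p ∈ q.primeFactors, (if ∃ i, p ∣ r i then ((p : ℝ) - 1)⁻¹ else 1)
        = ∑ r ∈ Fintype.piFinset (fun _ : Fin k => q.divisors),
            ∏ p : {x // x ∈ q.primeFactors},
              Wfun k p (Finset.univ.filter (fun i => (p : ℕ) ∣ r i)) :=
          Finset.sum_congr rfl fun r _ => hident r
      _ = ∑ g ∈ (Fintype.piFinset (fun _ : Fin k => q.divisors)).image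
            (fun (r : Fin k → ℕ) (p : {x // x ∈ q.primeFactors}) =>
              Finset.univ.filter (fun i => (p : ℕ) ∣ r i)),
            ∏ p : {x // x ∈ q.primeFactors}, Wfun k p (g p) :=
          (Finset.sum_image (f := fun g : {x // x ∈ q.primeFactors} → Finset (Fin k) =>
            ∏ p : {x // x ∈ q.primeFactors}, Wfun k p (g p)) hinj).symm
      _ ≤ ∑ g ∈ Fintype.piFinset (fun _ : {x // x ∈ q.primeFactors} =>
            (Finset.univ : Finset (Finset (Fin k)))),
            ∏ p : {x // x ∈ q.primeFactors}, Wfun k p (g p) := by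
          refine Finset.sum_le_sum_of_subset_of_nonneg ?_ fun g _ _ =>
            Finset.prod_nonneg fun p _ => hW0 p (g p)
          intro g hg
          rw [Fintype.mem_piFinset]
          intro p
          exact Finset.mem_univ _
      _ = ∏ p : {x // x ∈ q.primeFactors}, ∑ T : Finset (Fin k), Wfun k p T :=
          (Finset.prod_univ_sum _ _).symm
      _ ≤ ∏ p : {x // x ∈ q.primeFactors}, (1 + 2 ^ k / (((p : ℕ) : ℝ) - 1)) := by
          refine Finset.prod_le_prod (fun p _ => Finset.sum_nonneg fun T _ => hW0 p T)
            (fun p _ => ?_)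
          have hx1 : ((p : ℕ) : ℝ) - 1 ≥ 1 := hPp p p.2
          have hx0 : (0:ℝ) < (((p : ℕ) : ℝ) - 1)⁻¹ := by positivity
          have hxle : (((p : ℕ) : ℝ) - 1)⁻¹ ≤ 1 := by
            rw [inv_le_one_iff₀]; right; exact hx1
          calc ∑ T : Finset (Fin k), Wfun k p T
              = ∑ T : Finset (Fin k), ((((p : ℕ) : ℝ) - 1)⁻¹
                  + if T = ∅ then 1 - (((p : ℕ) : ℝ) - 1)⁻¹ else 0) := by
                refine Finset.sum_congr rfl fun T _ => ?_
                unfold Wfun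
                by_cases h : T = ∅ <;> simp [h]
            _ = (Fintype.card (Finset (Fin k))) * (((p : ℕ) : ℝ) - 1)⁻¹
                  + (1 - (((p : ℕ) : ℝ) - 1)⁻¹) := by
                rw [Finset.sum_add_distrib, Finset.sum_const, Finset.sum_ite_eq'
                  Finset.univ (∅ : Finset (Fin k))]
                simp [Finset.card_univ, nsmul_eq_mul]
            _ = 2 ^ k * (((p : ℕ) : ℝ) - 1)⁻¹ + (1 - (((p : ℕ) : ℝ) - 1)⁻¹) := by
                rw [Fintype.card_finset, Fintype.card_fin]
                push_cast
                ring
            _ ≤ 1 + 2 ^ k / (((p : ℕ) : ℝ) - 1) := by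
                rw [div_eq_mul_inv]
                linarith
      _ = ∏ p ∈ q.primeFactors, (1 + 2 ^ k / ((p : ℝ) - 1)) := by
          rw [Finset.univ_eq_attach]
          exact Finset.prod_attach q.primeFactors (fun p => (1 + 2 ^ k / ((p : ℝ) - 1)))
  exact le_trans (Finset.sum_le_sum hterm) hsum
end

section
/- Let k, h, q ≥ 1 be integers and let 𝒫 = {S_1,...,S_M} be a set partition of {1,...,k} into M cells. Then Σ_{(d_1,...,d_k) ∈ {1,...,h}^k with Δ_𝒫(D) = 1} Σ_{𝒬 ⊆ {1,...,k}} (−1)^{|𝒬|} 𝔖(D_𝒬; q) = Σ_{(e_1,...,e_M) ∈ {1,...,h}^M} Σ_{𝒥 ⊆ {1,...,M}} ( ∏_{m ∈ 𝒥} P_{|S_m|}(q/φ(q)) ) · 𝔖(E_𝒥; q), where D_𝒬 denotes the subtuple of D = (d_1,...,d_k) indexed by 𝒬 and E_𝒥 denotes the subtuple of E = (e_1,...,e_M) indexed by 𝒥. -/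
set_option maxHeartbeats 1000000
open Finset

noncomputable def Sq (q : ℕ) {ι : Type*} [DecidableEq ι] (X : Finset ι) (d : ι → ℤ) : ℝ :=
  ∏ p ∈ q.primeFactors,
    (1 - 1 / (p : ℝ)) ^ (-(X.card : ℤ)) *
      (1 - ((X.image fun i => d i % (p : ℤ)).card : ℝ) / (p : ℝ))

noncomputable def Ppoly (ℓ : ℕ) (z : ℝ) : ℝ :=
  ∑ j ∈ Finset.Icc 1 ℓ, (ℓ.choose j : ℝ) * (-1) ^ j * z ^ (j - 1)

lemma prod_primeFactors_real (q : ℕ) (hq : 1 ≤ q) :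
    ∏ p ∈ q.primeFactors, (1 - 1/(p:ℝ)) = (q.totient : ℝ) / q := by
  have h := congrArg (fun x : ℚ => (x : ℝ)) (Nat.totient_eq_mul_prod_factors q)
  push_cast at h
  rw [eq_div_iff (by positivity : (q:ℝ) ≠ 0), h, mul_comm]
  congr 1
  exact Finset.prod_congr rfl fun p hp => by rw [one_div]

lemma Sq_eq (q : ℕ) (hq : 1 ≤ q) {ι : Type*} [DecidableEq ι] (X : Finset ι) (d : ι → ℤ) :
    Sq q X d = ((q:ℝ)/q.totient)^X.card *
      ∏ p ∈ q.primeFactors, (1 - ((X.image fun i => d i % (p:ℤ)).card : ℝ)/p) := by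
  unfold Sq
  rw [prod_mul_distrib]
  congr 1
  have : ∀ p ∈ q.primeFactors, (1 - 1/(p:ℝ)) ^ (-(X.card : ℤ)) = ((1 - 1/(p:ℝ))⁻¹)^X.card := by
    intro p hp
    rw [zpow_neg, zpow_natCast, inv_pow]
  rw [prod_congr rfl this, prod_pow, prod_inv_distrib, prod_primeFactors_real q hq, inv_div]

lemma Ppoly_mul (ℓ : ℕ) (z : ℝ) : Ppoly ℓ z * z = (1-z)^ℓ - 1 := by
  unfold Ppoly
  rw [sum_mul]
  have h1 : ∀ j ∈ Finset.Icc 1 ℓ, (ℓ.choose j : ℝ) * (-1)^j * z^(j-1) * z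
      = (-z)^j * (1:ℝ)^(ℓ-j) * (ℓ.choose j) := by
    intro j hj
    obtain ⟨h1j, -⟩ := mem_Icc.mp hj
    have hz : z ^ (j-1) * z = z ^ j := by
      rw [← pow_succ, Nat.sub_add_cancel h1j]
    rw [neg_pow, one_pow, mul_one, mul_assoc, hz]
    ring
  rw [sum_congr rfl h1]
  have h2 : (1 - z)^ℓ = ∑ j ∈ range (ℓ+1), (-z)^j * (1:ℝ)^(ℓ-j) * (ℓ.choose j) := by
    rw [← add_pow]
    ring_nf
  have h3 : range (ℓ+1) = insert 0 (Finset.Icc 1 ℓ) := by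
    ext x
    simp [Nat.lt_succ_iff]
    omega
  rw [h2, h3, sum_insert (by simp)]
  simp

lemma sum_nonempty_pow {α : Type*} [DecidableEq α] (S : Finset α) (z : ℝ) :
    ∑ T ∈ S.powerset.erase ∅, (-z)^T.card = (1-z)^S.card - 1 := by
  have h : ∑ T ∈ S.powerset, (-z)^T.card = (1-z)^S.card := by
    have := prod_add (fun _ : α => -z) (fun _ => (1:ℝ)) S
    simp only [prod_const, prod_const_one, mul_one, one_pow] at this
    rw [← this]
    ring_nf
  have h2 := Finset.sum_erase_add S.powerset (fun T => (-z)^T.card)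
      (mem_powerset.mpr (empty_subset S))
  rw [h] at h2
  simp only [card_empty, pow_zero] at h2
  linarith

lemma key_sum {α β : Type*} [Fintype α] [DecidableEq α] [Fintype β] [DecidableEq β]
    (π : α → β) (z : ℝ) (W : Finset β → ℝ) :
    ∑ Q ∈ (univ : Finset α).powerset, (-z)^Q.card * W (Q.image π)
    = ∑ J ∈ (univ : Finset β).powerset,
        (∏ b ∈ J, ((1-z)^(univ.filter fun a => π a = b).card - 1)) * W J := by
  rw [← Finset.sum_fiberwise_of_maps_to
      (g := fun Q : Finset α => Q.image π)
      (fun Q _ => mem_powerset.mpr (subset_univ _)) (fun Q => (-z)^Q.card * W (Q.image π))]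
  refine sum_congr rfl fun J hJ => ?_
  have hW : ∀ Q ∈ (univ : Finset α).powerset.filter (fun Q => Q.image π = J),
      (-z)^Q.card * W (Q.image π) = (-z)^Q.card * W J := by
    intro Q hQ
    rw [(mem_filter.mp hQ).2]
  rw [sum_congr rfl hW, ← sum_mul]
  congr 1
  have hbij : ∑ Q ∈ (univ : Finset α).powerset.filter (fun Q => Q.image π = J), (-z)^Q.card
      = ∑ f ∈ Fintype.piFinset (fun b : β => if b ∈ J
            then ((univ.filter fun a => π a = b).powerset.erase ∅) else {∅}),
          ∏ b : β, (-z)^((f b).card) := by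
    refine sum_nbij' (fun Q => fun b => Q.filter (fun a => π a = b))
      (fun f => univ.filter (fun a => a ∈ f (π a))) ?_ ?_ ?_ ?_ ?_
    · intro Q hQ
      obtain ⟨-, him⟩ := mem_filter.mp hQ
      rw [Fintype.mem_piFinset]
      intro b
      by_cases hb : b ∈ J
      · simp only [hb, if_true, mem_erase, mem_powerset]
        constructor
        · rw [← Finset.nonempty_iff_ne_empty]
          rw [← him] at hb
          obtain ⟨a, ha, rfl⟩ := mem_image.mp hb
          exact ⟨a, mem_filter.mpr ⟨ha, rfl⟩⟩
        · exact fun a ha => mem_filter.mpr ⟨mem_univ a, (mem_filter.mp ha).2⟩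
      · simp only [hb, if_false, mem_singleton]
        rw [Finset.filter_eq_empty_iff]
        intro a ha hab
        exact hb (him ▸ mem_image.mpr ⟨a, ha, hab⟩)
    · intro f hf
      rw [Fintype.mem_piFinset] at hf
      have hsub : ∀ b, ∀ a ∈ f b, π a = b := by
        intro b a ha
        have := hf b
        by_cases hb : b ∈ J
        · rw [if_pos hb, mem_erase, mem_powerset] at this
          exact (mem_filter.mp (this.2 ha)).2
        · rw [if_neg hb, mem_singleton] at this
          rw [this] at ha
          exact absurd ha (notMem_empty a)
      rw [mem_filter]
      refine ⟨mem_powerset.mpr (subset_univ _), ?_⟩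
      ext b
      rw [mem_image]
      constructor
      · rintro ⟨a, ha, rfl⟩
        have haf := (mem_filter.mp ha).2
        by_contra hb
        have := hf (π a)
        rw [if_neg hb, mem_singleton] at this
        rw [this] at haf
        exact notMem_empty a haf
      · intro hb
        have := hf b
        rw [if_pos hb, mem_erase, ← Finset.nonempty_iff_ne_empty] at this
        obtain ⟨a, ha⟩ := this.1
        have hab := hsub b a ha
        exact ⟨a, mem_filter.mpr ⟨mem_univ a, by rw [hab]; exact ha⟩, hab⟩
    · intro Q hQ
      ext a
      simp
    · intro f hf
      rw [Fintype.mem_piFinset] at hf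
      have hsub : ∀ b, ∀ a ∈ f b, π a = b := by
        intro b a ha
        have := hf b
        by_cases hb : b ∈ J
        · rw [if_pos hb, mem_erase, mem_powerset] at this
          exact (mem_filter.mp (this.2 ha)).2
        · rw [if_neg hb, mem_singleton] at this
          rw [this] at ha
          exact absurd ha (notMem_empty a)
      funext b
      ext a
      simp only [mem_filter, mem_univ, true_and]
      constructor
      · rintro ⟨ha, rfl⟩
        exact ha
      · intro ha
        exact ⟨by rw [hsub b a ha]; exact ha, hsub b a ha⟩
    · intro Q hQ
      have hcard : Q.card = ∑ b : β, (Q.filter (fun a => π a = b)).card :=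
        card_eq_sum_card_fiberwise (fun a _ => mem_univ (π a))
      rw [hcard]
      exact (Finset.prod_pow_eq_pow_sum univ _ _).symm
  have hps := Finset.prod_univ_sum (fun b : β => if b ∈ J
      then ((univ.filter fun a => π a = b).powerset.erase ∅) else {∅})
      (fun b (T : Finset α) => (-z)^T.card)
  rw [hbij, ← hps]
  have : ∀ b : β, (∑ T ∈ (if b ∈ J then ((univ.filter fun a => π a = b).powerset.erase ∅)
        else {∅}), (-z)^T.card)
      = if b ∈ J then ((1-z)^(univ.filter fun a => π a = b).card - 1) else 1 := by
    intro b
    by_cases hb : b ∈ J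
    · rw [if_pos hb, if_pos hb, sum_nonempty_pow]
    · rw [if_neg hb, if_neg hb, sum_singleton, card_empty, pow_zero]
  rw [prod_congr rfl (fun b _ => this b), prod_ite_mem, univ_inter]

theorem partitions_to_polynomial_coefficients_S (k h q : ℕ) (hk : 1 ≤ k) (hh : 1 ≤ h)
    (hq : 1 ≤ q) (P : Finpartition (Finset.univ : Finset (Fin k))) :
    ∑ d ∈ (Fintype.piFinset fun _ : Fin k => Finset.Icc (1 : ℤ) (h : ℤ)).filter
        (fun d => ∀ S ∈ P.parts, ∀ i ∈ S, ∀ j ∈ S, d i = d j),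
      ∑ Q ∈ (Finset.univ : Finset (Fin k)).powerset, (-1 : ℝ) ^ Q.card * Sq q Q d
    = ∑ e ∈ Fintype.piFinset fun _ : P.parts => Finset.Icc (1 : ℤ) (h : ℤ),
        ∑ J ∈ (Finset.univ : Finset P.parts).powerset,
          (∏ S ∈ J, Ppoly (S : Finset (Fin k)).card ((q : ℝ) / (Nat.totient q : ℝ))) *
            Sq q J e := by
  classical
  set z : ℝ := (q:ℝ)/(q.totient : ℝ) with hzdef
  set π : Fin k → P.parts := fun i => ⟨P.part i, P.part_mem.2 (mem_univ i)⟩ with hπdef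
  have hmemπ : ∀ i : Fin k, i ∈ (π i : Finset (Fin k)) := fun i => P.mem_part (mem_univ i)
  have hπ_eq : ∀ (i : Fin k) (S : P.parts), i ∈ (S : Finset (Fin k)) → π i = S := by
    intro i S hi
    exact Subtype.ext (P.part_eq_of_mem S.2 hi)
  have hfiber : ∀ S : P.parts,
      (univ.filter fun i => π i = S) = (S : Finset (Fin k)) := by
    intro S
    ext i
    simp only [mem_filter, mem_univ, true_and]
    constructor
    · rintro rfl
      exact hmemπ i
    · exact hπ_eq i S
  -- inner identity for a fixed e
  have hinner : ∀ e : P.parts → ℤ,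
      ∑ Q ∈ (univ : Finset (Fin k)).powerset, (-1:ℝ)^Q.card * Sq q Q (fun x => e (π x))
      = ∑ J ∈ (univ : Finset P.parts).powerset,
          (∏ S ∈ J, Ppoly (S : Finset (Fin k)).card z) * Sq q J e := by
    intro e
    have hL : ∀ Q ∈ (univ : Finset (Fin k)).powerset,
        (-1:ℝ)^Q.card * Sq q Q (fun x => e (π x))
        = (-z)^Q.card * (∏ p ∈ q.primeFactors,
            (1 - (((Q.image π).image fun S => e S % (p:ℤ)).card : ℝ)/p)) := by
      intro Q hQ
      rw [Sq_eq q hq, ← mul_assoc, ← mul_pow, neg_one_mul]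
      congr 1
      refine Finset.prod_congr rfl fun p hp => ?_
      rw [Finset.image_image]
      rfl
    rw [sum_congr rfl hL,
      key_sum π z (fun J => ∏ p ∈ q.primeFactors, (1 - ((J.image fun S => e S % (p:ℤ)).card : ℝ)/p))]
    refine sum_congr rfl fun J hJ => ?_
    rw [Sq_eq q hq, ← mul_assoc]
    congr 1
    have h1 : ∀ S ∈ J, ((1-z)^(univ.filter fun i => π i = S).card - 1)
        = Ppoly (S : Finset (Fin k)).card z * z := by
      intro S hS
      rw [Ppoly_mul, hfiber]
    rw [prod_congr rfl h1, prod_mul_distrib, prod_const]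
  refine Finset.sum_nbij'
    (fun d => fun S : P.parts => d ((S : Finset (Fin k)).min' (P.nonempty_of_mem_parts S.2)))
    (fun e => fun x => e (π x)) ?_ ?_ ?_ ?_ ?_
  · intro d hd
    rw [Fintype.mem_piFinset]
    intro S
    exact Fintype.mem_piFinset.mp (mem_filter.mp hd).1 _
  · intro e he
    rw [mem_filter]
    refine ⟨Fintype.mem_piFinset.mpr fun x => Fintype.mem_piFinset.mp he _, ?_⟩
    intro S hS i hi j hj
    show e (π i) = e (π j)
    rw [hπ_eq i ⟨S, hS⟩ hi, hπ_eq j ⟨S, hS⟩ hj]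
  · intro d hd
    funext x
    obtain ⟨-, hconst⟩ := mem_filter.mp hd
    exact hconst (π x).1 (π x).2 _ (Finset.min'_mem _ _) x (hmemπ x)
  · intro e he
    funext S
    show e (π ((S : Finset (Fin k)).min' (P.nonempty_of_mem_parts S.2))) = e S
    rw [hπ_eq _ S (Finset.min'_mem _ _)]
  · intro d hd
    obtain ⟨-, hconst⟩ := mem_filter.mp hd
    have hd_eq : d = fun x => (fun S : P.parts =>
        d ((S : Finset (Fin k)).min' (P.nonempty_of_mem_parts S.2))) (π x) := by
      funext x
      exact hconst (π x).1 (π x).2 x (hmemπ x) _ (Finset.min'_mem _ _)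
    conv_lhs => rw [hd_eq]
    exact hinner (fun S : P.parts => d ((S : Finset (Fin k)).min' (P.nonempty_of_mem_parts S.2)))
end

section
/- For any integer k ≥ 1 and any positive integers q_1,...,q_k there exists a family (g_I)_{I ⊆ {1,...,k}} of positive integers with g_∅ = 1 such that: (i) q_i = ∏_{I : i ∈ I} g_I for every 1 ≤ i ≤ k; and (ii) for all subsets I, J ⊆ {1,...,k}, if gcd(g_I, g_J) > 1 then I ⊆ J or J ⊆ I. -/
theorem relative_gcd_parameterisation (k : ℕ) (hk : 1 ≤ k)
    (q : Fin k → ℕ) (hq : ∀ i, 0 < q i) :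
    ∃ g : Finset (Fin k) → ℕ, (∀ I, 0 < g I) ∧ g ∅ = 1 ∧
      (∀ i, q i = ∏ I ∈ (Finset.univ : Finset (Finset (Fin k))).filter (fun I => i ∈ I), g I) ∧
      (∀ I J : Finset (Fin k), 1 < Nat.gcd (g I) (g J) → I ⊆ J ∨ J ⊆ I) := by
  classical
  set Q : ℕ := ∏ i, q i with hQdef
  have hQ0 : 0 < Q := Finset.prod_pos (fun i _ => hq i)
  set e : Fin k → ℕ → ℕ := fun i p => (q i).factorization p with he
  set S : ℕ → ℕ → Finset (Fin k) :=
    fun p t => Finset.univ.filter (fun i => t < e i p) with hS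
  set c : ℕ → Finset (Fin k) → ℕ :=
    fun p I => ((Finset.range Q).filter (fun t => S p t = I)).card with hc
  set g : Finset (Fin k) → ℕ :=
    fun I => if I = ∅ then 1 else ∏ p ∈ Q.primeFactors, p ^ c p I with hg
  have hqQ : ∀ i, q i ≤ Q := fun i =>
    Finset.single_le_prod' (fun j _ => hq j) (Finset.mem_univ i)
  have heQ : ∀ i p, e i p ≤ Q := fun i p =>
    le_trans (le_of_lt (Nat.factorization_lt p (hq i).ne')) (hqQ i)
  have hanti : ∀ p t s, t ≤ s → S p s ⊆ S p t := by
    intro p t s hts x hx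
    simp only [hS, Finset.mem_filter, Finset.mem_univ, true_and] at hx ⊢
    omega
  have hgpos : ∀ I, 0 < g I := by
    intro I
    simp only [hg]
    split
    · exact one_pos
    · exact Finset.prod_pos fun p hp =>
        pow_pos (Nat.prime_of_mem_primeFactors hp).pos _
  have hgempty : g ∅ = 1 := by simp [hg]
  refine ⟨g, hgpos, hgempty, ?_, ?_⟩
  · -- (i)
    intro i
    have hne : ∀ I ∈ (Finset.univ : Finset (Finset (Fin k))).filter (fun I => i ∈ I),
        g I = ∏ p ∈ Q.primeFactors, p ^ c p I := by
      intro I hI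
      simp only [Finset.mem_filter] at hI
      have : I ≠ ∅ := Finset.ne_empty_of_mem hI.2
      simp [hg, this]
    rw [Finset.prod_congr rfl hne, Finset.prod_comm]
    have hfac : q i = ∏ p ∈ Q.primeFactors, p ^ e i p := by
      have h1 : (∏ p ∈ (q i).primeFactors, p ^ e i p) = q i := by
        rw [← Nat.prod_factorization_eq_prod_primeFactors]
        exact Nat.factorization_prod_pow_eq_self (hq i).ne'
      rw [← h1]
      refine Finset.prod_subset ?_ ?_
      · exact Nat.primeFactors_mono (Finset.dvd_prod_of_mem q (Finset.mem_univ i)) hQ0.ne'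
      · intro p _ hp
        have : e i p = 0 := by
          rw [he]
          exact Finsupp.notMem_support_iff.mp (by rwa [Nat.support_factorization])
        simp [this]
    rw [hfac]
    refine Finset.prod_congr rfl ?_
    intro p _
    rw [Finset.prod_pow_eq_pow_sum]
    congr 1
    -- ∑ I in filter (i ∈ ·), c p I = e i p
    have hcard : ((Finset.range Q).filter (fun t => i ∈ S p t)).card = e i p := by
      have : (Finset.range Q).filter (fun t => i ∈ S p t) = Finset.range (e i p) := by
        ext t
        simp only [Finset.mem_filter, Finset.mem_range, hS, Finset.mem_univ, true_and]
        constructor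
        · rintro ⟨_, h2⟩; exact h2
        · intro h; exact ⟨lt_of_lt_of_le h (heQ i p), h⟩
      rw [this, Finset.card_range]
    rw [← hcard]
    rw [Finset.card_eq_sum_card_fiberwise (f := S p)
      (t := (Finset.univ : Finset (Finset (Fin k))).filter (fun I => i ∈ I))
      (fun t ht => by
        simp only [Finset.mem_coe, Finset.mem_filter] at ht ⊢
        exact ⟨Finset.mem_univ _, ht.2⟩)]
    refine Finset.sum_congr rfl ?_
    intro I hI
    simp only [Finset.mem_filter] at hI
    congr 1
    rw [Finset.filter_filter]
    refine Finset.filter_congr ?_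
    intro t _
    constructor
    · rintro ⟨_, h⟩; exact h
    · intro h; exact ⟨h ▸ hI.2, h⟩
  · -- (ii)
    intro I J h
    have hIne : I ≠ ∅ := by
      rintro rfl
      rw [hgempty] at h
      simp at h
    have hJne : J ≠ ∅ := by
      rintro rfl
      rw [hgempty] at h
      simp at h
    obtain ⟨p, pp, pdvd⟩ := Nat.exists_prime_and_dvd (by omega : Nat.gcd (g I) (g J) ≠ 1)
    have key : ∀ K, K ≠ ∅ → p ∣ g K → ∃ t, S p t = K := by
      intro K hK hp
      simp only [hg, if_neg hK] at hp
      obtain ⟨p', hp', hdvd⟩ := pp.prime.exists_mem_finset_dvd hp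
      have hpp' : p = p' :=
        (Nat.prime_dvd_prime_iff_eq pp (Nat.prime_of_mem_primeFactors hp')).mp
          (pp.dvd_of_dvd_pow hdvd)
      subst hpp'
      have hcpos : 0 < c p K := by
        by_contra hcz
        push_neg at hcz
        interval_cases h' : c p K
        · simp [h'] at hdvd
          exact pp.ne_one hdvd
      obtain ⟨t, ht⟩ := Finset.card_pos.mp hcpos
      simp only [Finset.mem_filter] at ht
      exact ⟨t, ht.2⟩
    obtain ⟨t, ht⟩ := key I hIne (pdvd.trans (Nat.gcd_dvd_left _ _))
    obtain ⟨s, hs⟩ := key J hJne (pdvd.trans (Nat.gcd_dvd_right _ _))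
    rcases le_total t s with hts | hst
    · right; rw [← ht, ← hs]; exact hanti p t s hts
    · left; rw [← ht, ← hs]; exact hanti p s t hst
end

section
/- For any integer k ≥ 1 and any squarefree positive integers q_1,...,q_k there exists a family (g_I)_{I ⊆ {1,...,k}} of positive integers with g_∅ = 1 such that q_i = ∏_{I : i ∈ I} g_I for every 1 ≤ i ≤ k, and gcd(g_I, g_J) = 1 for all pairs of distinct subsets I ≠ J of {1,...,k}. -/
theorem relative_gcd_parameterisation_squarefree (k : ℕ) (hk : 1 ≤ k)
    (q : Fin k → ℕ) (hq0 : ∀ i, 0 < q i) (hq : ∀ i, Squarefree (q i)) :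
    ∃ g : Finset (Fin k) → ℕ, (∀ I, 0 < g I) ∧ g ∅ = 1 ∧
      (∀ i, q i = ∏ I ∈ (Finset.univ : Finset (Finset (Fin k))).filter (fun I => i ∈ I), g I) ∧
      (∀ I J : Finset (Fin k), I ≠ J → Nat.gcd (g I) (g J) = 1) := by
  classical
  set S : Finset ℕ := Finset.univ.biUnion (fun i => (q i).primeFactors) with hS
  set F : ℕ → Finset (Fin k) := fun p => Finset.univ.filter (fun j => p ∣ q j) with hF
  have hSprime : ∀ p ∈ S, p.Prime := by
    intro p hp
    simp only [hS, Finset.mem_biUnion, Nat.mem_primeFactors] at hp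
    obtain ⟨i, _, hpp, _⟩ := hp
    exact hpp
  refine ⟨fun I => ∏ p ∈ S.filter (fun p => F p = I), p, ?_, ?_, ?_, ?_⟩
  · intro I
    exact Finset.prod_pos (fun p hp => (hSprime p (Finset.mem_filter.mp hp).1).pos)
  · show ∏ p ∈ S.filter (fun p => F p = ∅), p = 1
    rw [Finset.filter_false_of_mem, Finset.prod_empty]
    intro p hp
    simp only [hS, Finset.mem_biUnion, Nat.mem_primeFactors] at hp
    obtain ⟨i, _, _, hpq, _⟩ := hp
    intro h
    have : i ∈ F p := by simp [hF, hpq]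
    rw [h] at this
    exact absurd this (Finset.notMem_empty i)
  · intro i
    have hmaps : ∀ p ∈ (q i).primeFactors, F p ∈
        (Finset.univ : Finset (Finset (Fin k))).filter (fun I => i ∈ I) := by
      intro p hp
      simp only [Nat.mem_primeFactors] at hp
      simp [hF, hp.2.1]
    show q i = ∏ I ∈ (Finset.univ : Finset (Finset (Fin k))).filter (fun I => i ∈ I),
      ∏ p ∈ S.filter (fun p => F p = I), p
    have key : ∀ I ∈ (Finset.univ : Finset (Finset (Fin k))).filter (fun I => i ∈ I),
        ∏ p ∈ S.filter (fun p => F p = I), p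
          = ∏ p ∈ (q i).primeFactors.filter (fun p => F p = I), p := by
      intro I hI
      simp only [Finset.mem_filter, Finset.mem_univ, true_and] at hI
      apply Finset.prod_congr _ (fun _ _ => rfl)
      ext p
      simp only [Finset.mem_filter, Nat.mem_primeFactors, hS, Finset.mem_biUnion,
        Finset.mem_univ, true_and]
      constructor
      · rintro ⟨⟨j, hj⟩, hFp⟩
        have hpi : p ∣ q i := by
          have : i ∈ F p := hFp ▸ hI
          simpa [hF] using this
        exact ⟨⟨hj.1, hpi, (hq0 i).ne'⟩, hFp⟩
      · rintro ⟨hp, hFp⟩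
        exact ⟨⟨i, hp⟩, hFp⟩
    rw [Finset.prod_congr rfl key, Finset.prod_fiberwise_of_maps_to hmaps (fun p => p),
      Nat.prod_primeFactors_of_squarefree (hq i)]
  · intro I J hIJ
    apply Nat.Coprime.gcd_eq_one
    apply Nat.Coprime.prod_left
    intro p hp
    apply Nat.Coprime.prod_right
    intro r hr
    simp only [Finset.mem_filter] at hp hr
    have hpP := hSprime p hp.1
    have hrP := hSprime r hr.1
    rw [Nat.coprime_primes hpP hrP]
    rintro rfl
    exact hIJ (hp.2 ▸ hr.2)
end

section
/- Let k ≥ 1 and h ≥ 1 be integers, let y ≥ h be a real number, let q be a squarefree positive integer all of whose prime factors are at most y, and let q_1,...,q_k be positive divisors of q. Then there exist positive integers s_1,...,s_k and r_1,...,r_k such that: (i) q_i = s_i·r_i for all i; (ii) s_i ≤ y^{2k} for all i; (iii) gcd(s_1⋯s_k, r_1⋯r_k) = 1; (iv) whenever q_i > h, also s_i > h; and (v) whenever q_i ≤ h, we have s_i = q_i and r_i = 1. -/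
private theorem my_prod_biUnion_le {ι : Type*} (s : Finset ι) (f : ι → Finset ℕ)
    (hf : ∀ i ∈ s, ∀ p ∈ f i, 0 < p) :
    ∏ p ∈ s.biUnion f, p ≤ ∏ i ∈ s, ∏ p ∈ f i, p := by
  classical
  induction s using Finset.induction_on with
  | empty => simp
  | @insert a s ha ih =>
    rw [Finset.biUnion_insert, Finset.prod_insert ha]
    have h1 : ∏ p ∈ f a ∪ s.biUnion f, p ≤
        (∏ p ∈ f a, p) * ∏ p ∈ s.biUnion f, p := by
      have hpos : 0 < ∏ p ∈ f a ∩ s.biUnion f, p := by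
        apply Finset.prod_pos
        intro p hp
        exact hf a (Finset.mem_insert_self a s) p (Finset.mem_of_mem_inter_left hp)
      calc ∏ p ∈ f a ∪ s.biUnion f, p
          ≤ (∏ p ∈ f a ∪ s.biUnion f, p) * ∏ p ∈ f a ∩ s.biUnion f, p :=
            Nat.le_mul_of_pos_right _ hpos
        _ = (∏ p ∈ f a, p) * ∏ p ∈ s.biUnion f, p := Finset.prod_union_inter
    refine h1.trans ?_
    exact Nat.mul_le_mul_left _ (ih fun i hi p hp => hf i (Finset.mem_insert_of_mem hi) p hp)

theorem divisor_factorisation (k h : ℕ) (hk : 1 ≤ k) (hh : 1 ≤ h)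
    (y : ℝ) (hy : (h : ℝ) ≤ y)
    (q : ℕ) (hq : Squarefree q) (hq0 : 0 < q)
    (hqy : ∀ p : ℕ, p.Prime → p ∣ q → (p : ℝ) ≤ y)
    (qs : Fin k → ℕ) (hqs : ∀ i, qs i ∣ q) (hqs0 : ∀ i, 0 < qs i) :
    ∃ s r : Fin k → ℕ, (∀ i, 0 < s i) ∧ (∀ i, 0 < r i) ∧
      (∀ i, qs i = s i * r i) ∧
      (∀ i, (s i : ℝ) ≤ y ^ (2 * k)) ∧
      Nat.gcd (∏ i, s i) (∏ i, r i) = 1 ∧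
      (∀ i, h < qs i → h < s i) ∧
      (∀ i, qs i ≤ h → s i = qs i ∧ r i = 1) := by
  classical
  have hy1 : (1 : ℝ) ≤ y := le_trans (by exact_mod_cast hh) hy
  have hy0 : (0 : ℝ) ≤ y := le_trans zero_le_one hy1
  have hsf : ∀ i, Squarefree (qs i) := fun i => hq.squarefree_of_dvd (hqs i)
  have hprod : ∀ i, ∏ p ∈ (qs i).primeFactors, p = qs i := fun i =>
    Nat.prod_primeFactors_of_squarefree (hsf i)
  -- prime factors of each qs i are ≤ y
  have hple : ∀ i, ∀ p ∈ (qs i).primeFactors, (p : ℝ) ≤ y := by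
    intro i p hp
    exact hqy p (Nat.prime_of_mem_primeFactors hp)
      ((Nat.dvd_of_mem_primeFactors hp).trans (hqs i))
  -- choose minimal boosting sets T i
  have hT : ∀ i, ∃ T : Finset ℕ, T ⊆ (qs i).primeFactors ∧
      (h < qs i → h < ∏ p ∈ T, p ∧ ((∏ p ∈ T, p : ℕ) : ℝ) ≤ h * y) := by
    intro i
    by_cases hbig : h < qs i
    · have hbig' : h < ∏ p ∈ (qs i).primeFactors, p := by rw [hprod i]; exact hbig
      set P := ((qs i).primeFactors.powerset).filter (fun t => h < ∏ p ∈ t, p) with hP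
      have hPne : P.Nonempty :=
        ⟨(qs i).primeFactors, by simp [hP, hbig']⟩
      obtain ⟨T, hTP, hTmin⟩ := P.exists_min_image Finset.card hPne
      rw [hP, Finset.mem_filter, Finset.mem_powerset] at hTP
      obtain ⟨hTsub, hTgt⟩ := hTP
      have hTne : T.Nonempty := by
        rcases T.eq_empty_or_nonempty with h0 | h0
        · exfalso; rw [h0] at hTgt; simp at hTgt; omega
        · exact h0
      obtain ⟨p, hp⟩ := hTne
      have herase : ∏ x ∈ T.erase p, x ≤ h := by
        by_contra hc
        push_neg at hc
        have hmem : T.erase p ∈ P := by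
          rw [hP, Finset.mem_filter, Finset.mem_powerset]
          exact ⟨(T.erase_subset p).trans hTsub, hc⟩
        have h1 := hTmin _ hmem
        have h2 := Finset.card_erase_lt_of_mem hp
        omega
      have hpy : (p : ℝ) ≤ y := hple i p (hTsub hp)
      refine ⟨T, hTsub, fun _ => ⟨hTgt, ?_⟩⟩
      have heq : ∏ x ∈ T, x = p * ∏ x ∈ T.erase p, x := (Finset.mul_prod_erase T _ hp).symm
      rw [heq]
      have herase' : (∏ x ∈ T.erase p, (x : ℝ)) ≤ (h : ℝ) := by
        rw [← Nat.cast_prod]; exact_mod_cast herase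
      push_cast
      calc (p : ℝ) * ∏ x ∈ T.erase p, (x : ℝ) ≤ y * h :=
            mul_le_mul hpy herase' (Finset.prod_nonneg fun x _ => by positivity) hy0
        _ = h * y := mul_comm _ _
    · exact ⟨∅, Finset.empty_subset _, fun hc => absurd hc hbig⟩
  choose T hTsub hTbig using hT
  set B : Fin k → Finset ℕ := fun i => if qs i ≤ h then (qs i).primeFactors else T i with hB
  have hBsub : ∀ i, B i ⊆ (qs i).primeFactors := by
    intro i
    rw [hB]
    by_cases hc : qs i ≤ h <;> simp [hc, hTsub i]
  set S : Finset ℕ := Finset.univ.biUnion B with hS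
  have hSprime : ∀ p ∈ S, p.Prime := by
    intro p hp
    rw [hS, Finset.mem_biUnion] at hp
    obtain ⟨i, _, hip⟩ := hp
    exact Nat.prime_of_mem_primeFactors (hBsub i hip)
  set s : Fin k → ℕ := fun i => ∏ p ∈ (qs i).primeFactors ∩ S, p with hs
  set r : Fin k → ℕ := fun i => ∏ p ∈ (qs i).primeFactors \ S, p with hr
  have hspos : ∀ i, 0 < s i := fun i => Finset.prod_pos fun p hp =>
    (Nat.prime_of_mem_primeFactors (Finset.mem_of_mem_inter_left hp)).pos
  have hrpos : ∀ i, 0 < r i := fun i => Finset.prod_pos fun p hp =>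
    (Nat.prime_of_mem_primeFactors (Finset.mem_sdiff.mp hp).1).pos
  have hsr : ∀ i, qs i = s i * r i := by
    intro i
    have hdisj : Disjoint ((qs i).primeFactors ∩ S) ((qs i).primeFactors \ S) := by
      rw [Finset.disjoint_left]
      intro a ha ha'
      exact (Finset.mem_sdiff.mp ha').2 (Finset.mem_of_mem_inter_right ha)
    have hun : ((qs i).primeFactors ∩ S) ∪ ((qs i).primeFactors \ S) = (qs i).primeFactors := by
      ext a
      simp only [Finset.mem_union, Finset.mem_inter, Finset.mem_sdiff]
      tauto
    rw [hs, hr, ← Finset.prod_union hdisj, hun, hprod i]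
  -- small indices
  have hsmall : ∀ i, qs i ≤ h → s i = qs i ∧ r i = 1 := by
    intro i hle
    have hBi : B i = (qs i).primeFactors := by rw [hB]; simp [hle]
    have hsubS : (qs i).primeFactors ⊆ S := by
      rw [hS, ← hBi]
      exact Finset.subset_biUnion_of_mem B (Finset.mem_univ i)
    constructor
    · rw [hs]
      simp only []
      rw [Finset.inter_eq_left.mpr hsubS, hprod i]
    · rw [hr]
      simp only []
      rw [Finset.sdiff_eq_empty_iff_subset.mpr hsubS, Finset.prod_empty]
  -- big indices
  have hbig : ∀ i, h < qs i → h < s i := by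
    intro i hgt
    have hBi : B i = T i := by rw [hB]; simp [Nat.not_le.mpr hgt]
    have hTS : T i ⊆ S := by
      rw [hS, ← hBi]
      exact Finset.subset_biUnion_of_mem B (Finset.mem_univ i)
    have hsubset : T i ⊆ (qs i).primeFactors ∩ S :=
      Finset.subset_inter (hTsub i) hTS
    have hdvd : ∏ p ∈ T i, p ∣ s i := Finset.prod_dvd_prod_of_subset _ _ _ hsubset
    have := (hTbig i hgt).1
    exact lt_of_lt_of_le this (Nat.le_of_dvd (hspos i) hdvd)
  -- gcd
  have hgcd : Nat.gcd (∏ i, s i) (∏ i, r i) = 1 := by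
    by_contra hne
    rw [← Nat.coprime_iff_gcd_eq_one] at hne
    obtain ⟨p, hpp, hps, hpr⟩ := Nat.Prime.not_coprime_iff_dvd.mp hne
    obtain ⟨i, _, hpi⟩ := hpp.prime.exists_mem_finset_dvd hps
    obtain ⟨j, _, hpj⟩ := hpp.prime.exists_mem_finset_dvd hpr
    obtain ⟨a, ha, hpa⟩ := hpp.prime.exists_mem_finset_dvd hpi
    obtain ⟨b, hb, hpb⟩ := hpp.prime.exists_mem_finset_dvd hpj
    have hap : p = a := (Nat.prime_dvd_prime_iff_eq hpp
      (Nat.prime_of_mem_primeFactors (Finset.mem_of_mem_inter_left ha))).mp hpa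
    have hbp : p = b := (Nat.prime_dvd_prime_iff_eq hpp
      (Nat.prime_of_mem_primeFactors (Finset.mem_sdiff.mp hb).1)).mp hpb
    have hinS : p ∈ S := hap ▸ Finset.mem_of_mem_inter_right ha
    have hninS : p ∉ S := hbp ▸ (Finset.mem_sdiff.mp hb).2
    exact hninS hinS
  -- bound
  have hbound : ∀ i, (s i : ℝ) ≤ y ^ (2 * k) := by
    intro i
    have h1 : s i ≤ ∏ p ∈ S, p := by
      apply Nat.le_of_dvd
      · exact Finset.prod_pos fun p hp => (hSprime p hp).pos
      · exact Finset.prod_dvd_prod_of_subset _ _ _ (Finset.inter_subset_right)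
    have h2 : ∏ p ∈ S, p ≤ ∏ j : Fin k, ∏ p ∈ B j, p := by
      rw [hS]
      exact my_prod_biUnion_le _ _ fun j _ p hp =>
        (Nat.prime_of_mem_primeFactors (hBsub j hp)).pos
    have h3 : ∀ j : Fin k, ((∏ p ∈ B j, p : ℕ) : ℝ) ≤ y ^ 2 := by
      intro j
      rw [hB]
      by_cases hc : qs j ≤ h
      · simp only [if_pos hc, hprod j]
        have : (qs j : ℝ) ≤ y := le_trans (by exact_mod_cast hc) hy
        calc (qs j : ℝ) ≤ y := this
          _ ≤ y ^ 2 := by nlinarith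
      · simp only [if_neg hc]
        have := (hTbig j (Nat.not_le.mp hc)).2
        calc ((∏ p ∈ T j, p : ℕ) : ℝ) ≤ h * y := this
          _ ≤ y * y := mul_le_mul_of_nonneg_right hy hy0
          _ = y ^ 2 := (sq y).symm
    calc (s i : ℝ) ≤ ((∏ j : Fin k, ∏ p ∈ B j, p : ℕ) : ℝ) := by
          exact_mod_cast h1.trans h2
      _ = ∏ j : Fin k, ((∏ p ∈ B j, p : ℕ) : ℝ) := by push_cast; ring
      _ ≤ ∏ _j : Fin k, y ^ 2 := Finset.prod_le_prod
          (fun j _ => by positivity) (fun j _ => h3 j)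
      _ = (y ^ 2) ^ k := by simp
      _ = y ^ (2 * k) := (pow_mul y 2 k).symm
  exact ⟨s, r, hspos, hrpos, hsr, hbound, hgcd, hbig, hsmall⟩
end

section
/- Let h ≥ 1 be an integer and y ≥ h a real number. If q is a squarefree positive integer with q > h all of whose prime factors are at most y, then q has a positive divisor d with h < d ≤ y². -/
theorem smooth_squarefree_has_medium_divisor (h : ℕ) (hh : 1 ≤ h)
    (y : ℝ) (hy : (h : ℝ) ≤ y)
    (q : ℕ) (hq : Squarefree q) (hqh : h < q)
    (hqy : ∀ p : ℕ, p.Prime → p ∣ q → (p : ℝ) ≤ y) :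
    ∃ d : ℕ, 0 < d ∧ d ∣ q ∧ h < d ∧ (d : ℝ) ≤ y ^ 2 := by
  have hP : ∃ n, n ∣ q ∧ h < n := ⟨q, dvd_refl q, hqh⟩
  classical
  set d := Nat.find hP with hd
  obtain ⟨hdq, hhd⟩ := Nat.find_spec hP
  have hmin : ∀ m, m < d → ¬(m ∣ q ∧ h < m) := fun m hm => Nat.find_min hP hm
  have hd1 : 1 < d := lt_of_le_of_lt hh hhd
  have hdpos : 0 < d := lt_trans one_pos hd1
  set p := d.minFac with hp
  have hpp : p.Prime := Nat.minFac_prime (by omega)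
  have hpd : p ∣ d := Nat.minFac_dvd d
  obtain ⟨m, hm⟩ := hpd
  have hmq : m ∣ q := (Dvd.intro_left p hm.symm).trans hdq
  have hmpos : 0 < m := Nat.pos_of_ne_zero (fun h0 => by simp [h0] at hm; omega)
  have hmd : m < d := by
    have := hpp.two_le
    calc m < p * m := by
          have : 1 * m < p * m := (Nat.mul_lt_mul_right hmpos).mpr (by omega)
          simpa using this
      _ = d := hm.symm
  have hmh : m ≤ h := by
    by_contra hc
    exact hmin m hmd ⟨hmq, by omega⟩
  have hpy : (p : ℝ) ≤ y := hqy p hpp (dvd_trans (Nat.minFac_dvd d) hdq)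
  refine ⟨d, hdpos, hdq, hhd, ?_⟩
  have : (d : ℝ) = (p : ℝ) * (m : ℝ) := by rw [hm]; push_cast; ring
  rw [this, sq]
  have hy0 : (0:ℝ) ≤ y := le_trans (by positivity) hy
  have hmy : (m : ℝ) ≤ y := le_trans (by exact_mod_cast hmh) hy
  exact mul_le_mul hpy hmy (by positivity) hy0
end

section
/- Let q be a squarefree positive integer, let h ≥ 1 be an integer, and let k_1, k_2 ≥ 0 be integers with k = k_1 + k_2. Then M_{k_1,k_2}(q,h) = q · (φ(q)/q)^{k} · V_{k_1,k_2}(q,h). -/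
open scoped Classical

/-- `Mkk q h k₁ k₂ = ∑_{n=1}^{q} (N(n) − (φ(q)/q)h)^{k₁} N(n)^{k₂}` where
`N(n) = #{m : n ≤ m < n+h, gcd(m,q)=1}`. -/
noncomputable def Mkk (q h k₁ k₂ : ℕ) : ℝ :=
  ∑ n ∈ Finset.Icc 1 q,
    ((((Finset.Ico n (n + h)).filter (fun m => Nat.gcd m q = 1)).card : ℝ)
        - (Nat.totient q : ℝ) / (q : ℝ) * (h : ℝ)) ^ k₁ *
      ((((Finset.Ico n (n + h)).filter (fun m => Nat.gcd m q = 1)).card : ℝ)) ^ k₂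

/-- `Efun h x = ∑_{m=1}^{h} e^{2πimx}`. -/
noncomputable def Efun (h : ℕ) (x : ℚ) : ℂ :=
  ∑ m ∈ Finset.Icc 1 h, Complex.exp (2 * Real.pi * Complex.I * (m : ℂ) * (x : ℂ))

/-- `Vkk q h k₁ k₂`: the sum over `(k₁+k₂)`-tuples of divisors of `q`, with
`qᵢ > 1` for the first `k₁` indices, of `∏ μ(qᵢ)/φ(qᵢ)` times the sum of
`∏ E(aᵢ/qᵢ)` over admissible numerators. -/
noncomputable def Vkk (q h k₁ k₂ : ℕ) : ℂ :=
  ∑ qs ∈ (Fintype.piFinset fun _ : Fin (k₁ + k₂) => q.divisors).filter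
      (fun qs => ∀ i : Fin (k₁ + k₂), (i : ℕ) < k₁ → 1 < qs i),
    (∏ i, ((ArithmeticFunction.moebius (qs i) : ℂ) / (Nat.totient (qs i) : ℂ))) *
      ∑ a ∈ (Fintype.piFinset fun i => Finset.Icc 1 (qs i)).filter
          (fun a => (∀ i, Nat.gcd (a i) (qs i) = 1) ∧
            ∃ z : ℤ, ∑ i, (a i : ℚ) / (qs i : ℚ) = (z : ℚ)),
        ∏ i, Efun h ((a i : ℚ) / (qs i : ℚ))

open Finset ArithmeticFunction

noncomputable def psi (x : ℚ) : ℂ := Complex.exp (2 * Real.pi * Complex.I * (x : ℂ))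

lemma psi_add (x y : ℚ) : psi (x + y) = psi x * psi y := by
  rw [psi, psi, psi, ← Complex.exp_add]; push_cast; ring_nf

lemma psi_zero : psi 0 = 1 := by simp [psi]

lemma psi_int (z : ℤ) : psi (z : ℚ) = 1 := by
  rw [psi]
  have : (2 * Real.pi * Complex.I * ((z:ℚ) : ℂ)) = (z : ℂ) * (2 * Real.pi * Complex.I) := by
    push_cast; ring
  rw [this, Complex.exp_int_mul_two_pi_mul_I]

lemma psi_nat (n : ℕ) : psi (n : ℚ) = 1 := by exact_mod_cast psi_int (n : ℤ)

lemma psi_eq_one_iff (x : ℚ) : psi x = 1 ↔ ∃ z : ℤ, x = (z : ℚ) := by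
  rw [psi, Complex.exp_eq_one_iff]
  constructor
  · rintro ⟨n, hn⟩
    refine ⟨n, ?_⟩
    have h2 : (2 * Real.pi * Complex.I) ≠ 0 := by
      simp [Real.pi_ne_zero, Complex.I_ne_zero]
    have : (x : ℂ) = (n : ℂ) := by
      have := hn
      rw [mul_comm (n:ℂ)] at this
      exact mul_left_cancel₀ h2 this
    exact_mod_cast this
  · rintro ⟨z, rfl⟩
    exact ⟨z, by push_cast; ring⟩

lemma psi_nsmul (n : ℕ) (x : ℚ) : psi ((n : ℚ) * x) = psi x ^ n := by
  induction n with
  | zero => simp [psi_zero]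
  | succ k ih => push_cast; rw [add_mul, one_mul, psi_add, ih, pow_succ]

lemma psi_sum {ι : Type*} (s : Finset ι) (f : ι → ℚ) :
    psi (∑ i ∈ s, f i) = ∏ i ∈ s, psi (f i) := by
  induction s using Finset.cons_induction with
  | empty => simp [psi_zero]
  | cons a s ha ih => rw [Finset.sum_cons, Finset.prod_cons, psi_add, ih]

lemma sum_psi_range (d : ℕ) (hd : 0 < d) (x : ℚ) (hx : ∃ z : ℤ, (d : ℚ) * x = (z : ℚ)) :
    ∑ a ∈ range d, psi ((a : ℚ) * x) = if ∃ z : ℤ, x = (z : ℚ) then (d : ℂ) else 0 := by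
  simp_rw [psi_nsmul]
  by_cases h : ∃ z : ℤ, x = (z : ℚ)
  · rw [if_pos h]
    rw [← psi_eq_one_iff] at h
    simp [h]
  · rw [if_neg h]
    have hne : psi x ≠ 1 := fun hc => h ((psi_eq_one_iff x).mp hc)
    have hpow : psi x ^ d = 1 := by
      obtain ⟨z, hz⟩ := hx
      rw [← psi_nsmul, hz, psi_int]
    rw [geom_sum_eq hne, hpow, sub_self, zero_div]

lemma sum_psi_Icc (d : ℕ) (hd : 0 < d) (x : ℚ) (hx : ∃ z : ℤ, (d : ℚ) * x = (z : ℚ)) :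
    ∑ a ∈ Icc 1 d, psi ((a : ℚ) * x) = if ∃ z : ℤ, x = (z : ℚ) then (d : ℂ) else 0 := by
  have h1 : ∑ a ∈ range (d + 1), psi ((a : ℚ) * x)
      = ∑ a ∈ range d, psi ((a : ℚ) * x) + psi ((d : ℚ) * x) := Finset.sum_range_succ _ d
  have h2 : ∑ a ∈ range (d + 1), psi ((a : ℚ) * x)
      = ∑ a ∈ Icc 1 d, psi ((a : ℚ) * x) + psi ((0 : ℚ) * x) := by
    rw [Finset.sum_range_succ' (fun a => psi ((a : ℚ) * x)) d]
    congr 1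
    · rw [show Icc 1 d = Ico 1 (d + 1) by rfl, Finset.sum_Ico_eq_sum_range]
      simp only [Nat.add_sub_cancel]
      apply Finset.sum_congr rfl
      intro i _
      congr 1
      push_cast
      ring
  have hdx : psi ((d : ℚ) * x) = 1 := by
    obtain ⟨z, hz⟩ := hx; rw [hz, psi_int]
  have h0x : psi ((0 : ℚ) * x) = 1 := by rw [zero_mul, psi_zero]
  have := h1.symm.trans h2
  rw [hdx, h0x] at this
  rw [← add_left_inj (1:ℂ), ← this, sum_psi_range d hd x hx]

lemma moebius_coprime_sum (q m : ℕ) (hq0 : 0 < q) :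
    ∑ d ∈ q.divisors.filter (· ∣ m), (moebius d : ℂ) =
      if Nat.gcd m q = 1 then 1 else 0 := by
  have hg : 0 < Nat.gcd m q := Nat.gcd_pos_of_pos_right m hq0
  have hset : q.divisors.filter (· ∣ m) = (Nat.gcd m q).divisors := by
    ext d
    simp only [Finset.mem_filter, Nat.mem_divisors]
    constructor
    · rintro ⟨⟨hdq, -⟩, hdm⟩
      exact ⟨Nat.dvd_gcd hdm hdq, hg.ne'⟩
    · rintro ⟨hd, -⟩
      exact ⟨⟨hd.trans (Nat.gcd_dvd_right m q), hq0.ne'⟩, hd.trans (Nat.gcd_dvd_left m q)⟩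
  rw [hset]
  have h := congrArg (fun f : ArithmeticFunction ℤ => (f (Nat.gcd m q) : ℂ))
    moebius_mul_coe_zeta
  simp only [coe_mul_zeta_apply] at h
  push_cast at h
  rw [h, one_apply]
  split <;> simp

lemma moebius_div_sum (n : ℕ) (hn : 0 < n) :
    ∑ f ∈ n.divisors, (moebius f : ℂ) / (f : ℂ) = (n.totient : ℂ) / (n : ℂ) := by
  have key : ∀ k > 0, (k.totient : ℂ) =
      ∑ x ∈ k.divisorsAntidiagonal, (moebius x.1 : ℂ) * (x.2 : ℂ) := by
    have := (sum_eq_iff_sum_mul_moebius_eq (R := ℂ)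
      (f := fun d => (d.totient : ℂ)) (g := fun k => (k : ℂ))).mp ?_
    · intro k hk
      exact ((this k hk).symm)
    · intro k hk
      exact_mod_cast congrArg (Nat.cast : ℕ → ℂ) (Nat.sum_totient k)
  have h1 := key n hn
  rw [Nat.sum_divisorsAntidiagonal (fun d e => (moebius d : ℂ) * (e : ℂ))] at h1
  have h2 : ∀ f ∈ n.divisors, (moebius f : ℂ) * ((n / f : ℕ) : ℂ) / (n : ℂ)
      = (moebius f : ℂ) / (f : ℂ) := by
    intro f hf
    obtain ⟨hfd, -⟩ := Nat.mem_divisors.mp hf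
    have hf0 : (f : ℂ) ≠ 0 := Nat.cast_ne_zero.mpr (Nat.pos_of_mem_divisors hf).ne'
    have hn0 : (n : ℂ) ≠ 0 := Nat.cast_ne_zero.mpr hn.ne'
    rw [Nat.cast_div hfd hf0]
    field_simp
  rw [← Finset.sum_congr rfl h2, ← Finset.sum_div, ← h1]

lemma regroup (q m : ℕ) (hq0 : 0 < q) :
    ∑ d ∈ q.divisors, (moebius d : ℂ) / (d : ℂ) * ∑ a ∈ Icc 1 d, psi ((a : ℚ) * m / d)
    = ∑ e ∈ q.divisors,
        (∑ f ∈ (q / e).divisors, (moebius (e * f) : ℂ) / ((e : ℂ) * (f : ℂ)))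
        * ∑ b ∈ (Icc 1 e).filter (fun b => Nat.gcd b e = 1), psi ((b : ℚ) * m / e) := by
  have lhs_eq : ∑ d ∈ q.divisors, (moebius d : ℂ) / (d : ℂ) * ∑ a ∈ Icc 1 d, psi ((a : ℚ) * m / d)
      = ∑ p ∈ q.divisors.sigma (fun d => Icc 1 d),
          (moebius p.1 : ℂ) / (p.1 : ℂ) * psi ((p.2 : ℚ) * m / p.1) := by
    rw [Finset.sum_sigma]
    exact Finset.sum_congr rfl fun d _ => by rw [Finset.mul_sum]
  have rhs_eq : ∑ e ∈ q.divisors,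
        (∑ f ∈ (q / e).divisors, (moebius (e * f) : ℂ) / ((e : ℂ) * (f : ℂ)))
        * ∑ b ∈ (Icc 1 e).filter (fun b => Nat.gcd b e = 1), psi ((b : ℚ) * m / e)
      = ∑ p ∈ q.divisors.sigma
            (fun e => (q / e).divisors ×ˢ ((Icc 1 e).filter (fun b => Nat.gcd b e = 1))),
          (moebius (p.1 * p.2.1) : ℂ) / ((p.1 : ℂ) * (p.2.1 : ℂ)) * psi ((p.2.2 : ℚ) * m / p.1) := by
    rw [Finset.sum_sigma]
    refine Finset.sum_congr rfl fun e he => ?_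
    rw [Finset.sum_mul_sum, Finset.sum_product]
  rw [lhs_eq, rhs_eq]
  refine Finset.sum_nbij'
    (i := fun p : Σ _ : ℕ, ℕ =>
      (⟨p.1 / Nat.gcd p.2 p.1, (Nat.gcd p.2 p.1, p.2 / Nat.gcd p.2 p.1)⟩ : Σ _ : ℕ, ℕ × ℕ))
    (j := fun p : Σ _ : ℕ, ℕ × ℕ => (⟨p.1 * p.2.1, p.2.2 * p.2.1⟩ : Σ _ : ℕ, ℕ))
    ?_ ?_ ?_ ?_ ?_
  · rintro ⟨d, a⟩ hp
    simp only [Finset.mem_sigma, Nat.mem_divisors, Finset.mem_Icc] at hp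
    obtain ⟨⟨hdq, -⟩, ha1, had⟩ := hp
    have hd0 : 0 < d := lt_of_lt_of_le ha1 had
    have ha0 : 0 < a := ha1
    have hg : 0 < Nat.gcd a d := Nat.gcd_pos_of_pos_left d ha0
    have hgd : Nat.gcd a d ∣ d := Nat.gcd_dvd_right a d
    have hga : Nat.gcd a d ∣ a := Nat.gcd_dvd_left a d
    simp only [Finset.mem_sigma, Nat.mem_divisors, Finset.mem_product, Finset.mem_filter,
      Finset.mem_Icc]
    refine ⟨⟨(Nat.div_dvd_of_dvd hgd).trans hdq, hq0.ne'⟩, ⟨?_, ?_⟩, ⟨?_, ?_⟩, ?_⟩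
    · have h1 : d / Nat.gcd a d * Nat.gcd a d = d := Nat.div_mul_cancel hgd
      have h2 : d / Nat.gcd a d ∣ q := (Nat.div_dvd_of_dvd hgd).trans hdq
      rw [Nat.dvd_div_iff_mul_dvd h2, h1]
      exact hdq
    · have h2 : d / Nat.gcd a d ∣ q := (Nat.div_dvd_of_dvd hgd).trans hdq
      have he0 : 0 < d / Nat.gcd a d := Nat.div_pos (Nat.le_of_dvd hd0 hgd) hg
      exact (Nat.div_pos (Nat.le_of_dvd hq0 h2) he0).ne'
    · exact Nat.one_le_div_iff hg |>.mpr (Nat.le_of_dvd ha0 hga)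
    · exact Nat.div_le_div_right had
    · exact Nat.coprime_div_gcd_div_gcd hg
  · rintro ⟨e, f, b⟩ hp
    simp only [Finset.mem_sigma, Nat.mem_divisors, Finset.mem_product, Finset.mem_filter,
      Finset.mem_Icc] at hp
    obtain ⟨⟨heq, -⟩, ⟨⟨hfqe, hqe0⟩, ⟨hb1, hbe⟩, -⟩⟩ := hp
    have he0 : 0 < e := Nat.pos_of_dvd_of_pos heq hq0
    have hf0 : 0 < f := Nat.pos_of_dvd_of_pos hfqe (Nat.pos_of_ne_zero hqe0)
    simp only [Finset.mem_sigma, Nat.mem_divisors, Finset.mem_Icc]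
    refine ⟨⟨?_, hq0.ne'⟩, ?_, ?_⟩
    · calc e * f ∣ e * (q / e) := mul_dvd_mul_left e hfqe
        _ = q := Nat.mul_div_cancel' heq
    · exact Nat.one_le_iff_ne_zero.mpr (Nat.mul_ne_zero (by omega : b ≠ 0) hf0.ne')
    · exact Nat.mul_le_mul_right f hbe
  · rintro ⟨d, a⟩ hp
    simp only [Finset.mem_sigma, Nat.mem_divisors, Finset.mem_Icc] at hp
    obtain ⟨-, ha1, had⟩ := hp
    have hgd : Nat.gcd a d ∣ d := Nat.gcd_dvd_right a d
    have hga : Nat.gcd a d ∣ a := Nat.gcd_dvd_left a d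
    have h1 : d / Nat.gcd a d * Nat.gcd a d = d := Nat.div_mul_cancel hgd
    have h2 : a / Nat.gcd a d * Nat.gcd a d = a := Nat.div_mul_cancel hga
    simp only [Sigma.mk.inj_iff, heq_eq_eq]
    exact ⟨h1, by rw [h2]⟩
  · rintro ⟨e, f, b⟩ hp
    simp only [Finset.mem_sigma, Nat.mem_divisors, Finset.mem_product, Finset.mem_filter,
      Finset.mem_Icc] at hp
    obtain ⟨⟨heq, -⟩, ⟨⟨hfqe, hqe0⟩, ⟨hb1, hbe⟩, hcop⟩⟩ := hp
    have he0 : 0 < e := Nat.pos_of_dvd_of_pos heq hq0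
    have hf0 : 0 < f := Nat.pos_of_dvd_of_pos hfqe (Nat.pos_of_ne_zero hqe0)
    have hg : Nat.gcd (b * f) (e * f) = f := by
      rw [Nat.gcd_mul_right, hcop, one_mul]
    simp only [hg, Sigma.mk.inj_iff, heq_eq_eq, Prod.mk.injEq]
    exact ⟨Nat.mul_div_cancel e hf0, trivial, Nat.mul_div_cancel b hf0⟩
  · rintro ⟨d, a⟩ hp
    simp only [Finset.mem_sigma, Nat.mem_divisors, Finset.mem_Icc] at hp
    obtain ⟨⟨hdq, -⟩, ha1, had⟩ := hp
    have hd0 : 0 < d := lt_of_lt_of_le ha1 had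
    have hg : 0 < Nat.gcd a d := Nat.gcd_pos_of_pos_left d ha1
    have hgd : Nat.gcd a d ∣ d := Nat.gcd_dvd_right a d
    have hga : Nat.gcd a d ∣ a := Nat.gcd_dvd_left a d
    have h1 : d / Nat.gcd a d * Nat.gcd a d = d := Nat.div_mul_cancel hgd
    have h2 : a / Nat.gcd a d * Nat.gcd a d = a := Nat.div_mul_cancel hga
    have he0 : 0 < d / Nat.gcd a d := Nat.div_pos (Nat.le_of_dvd hd0 hgd) hg
    have hg0 : (Nat.gcd a d : ℚ) ≠ 0 := by exact_mod_cast hg.ne'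
    have hd0' : (d : ℚ) ≠ 0 := by exact_mod_cast hd0.ne'
    have he0' : ((d / Nat.gcd a d : ℕ) : ℚ) ≠ 0 := by exact_mod_cast he0.ne'
    simp only []
    rw [h1]
    congr 1
    · rw [← Nat.cast_mul, h1]
    · congr 1
      rw [Nat.cast_div hga hg0, Nat.cast_div hgd hg0]
      field_simp

lemma coeff_eq (q e : ℕ) (hq : Squarefree q) (hq0 : 0 < q) (he : e ∣ q) :
    ∑ f ∈ (q / e).divisors, (moebius (e * f) : ℂ) / ((e : ℂ) * (f : ℂ))
      = ((q.totient : ℂ) / (q : ℂ)) * ((moebius e : ℂ) / (e.totient : ℂ)) := by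
  have he0 : 0 < e := Nat.pos_of_dvd_of_pos he hq0
  have hqe0 : 0 < q / e := Nat.div_pos (Nat.le_of_dvd hq0 he) he0
  have hmul : e * (q / e) = q := Nat.mul_div_cancel' he
  have hco : Nat.Coprime e (q / e) := by
    have : Squarefree (e * (q / e)) := by rwa [hmul]
    exact Nat.squarefree_mul_iff.mp this |>.1
  have step : ∀ f ∈ (q / e).divisors,
      (moebius (e * f) : ℂ) / ((e : ℂ) * (f : ℂ))
        = ((moebius e : ℂ) / e) * ((moebius f : ℂ) / f) := by
    intro f hf
    have hcf : Nat.Coprime e f := Nat.Coprime.coprime_dvd_right (Nat.dvd_of_mem_divisors hf) hco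
    rw [isMultiplicative_moebius.map_mul_of_coprime hcf]
    push_cast
    ring
  rw [Finset.sum_congr rfl step, ← Finset.mul_sum, moebius_div_sum (q / e) hqe0]
  have htot : (q.totient : ℂ) = (e.totient : ℂ) * ((q / e).totient : ℂ) := by
    rw [← Nat.cast_mul, ← Nat.totient_mul hco, hmul]
  have hqc : (q : ℂ) = (e : ℂ) * ((q / e : ℕ) : ℂ) := by
    rw [← Nat.cast_mul, hmul]
  have h1 : (e : ℂ) ≠ 0 := Nat.cast_ne_zero.mpr he0.ne'
  have h2 : ((q / e : ℕ) : ℂ) ≠ 0 := Nat.cast_ne_zero.mpr hqe0.ne'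
  have h3 : (e.totient : ℂ) ≠ 0 := Nat.cast_ne_zero.mpr (Nat.totient_pos.mpr he0).ne'
  have h4 : ((q / e).totient : ℂ) ≠ 0 := Nat.cast_ne_zero.mpr (Nat.totient_pos.mpr hqe0).ne'
  rw [htot, hqc]
  rw [div_mul_div_comm, div_mul_div_comm]
  rw [div_eq_div_iff (by exact mul_ne_zero h1 h2) (by
    exact mul_ne_zero (mul_ne_zero h1 h2) h3)]
  ring

lemma indicator_eq (q m : ℕ) (hq : Squarefree q) (hq0 : 0 < q) :
    (if Nat.gcd m q = 1 then (1 : ℂ) else 0)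
    = ((q.totient : ℂ) / (q : ℂ)) * ∑ e ∈ q.divisors, (moebius e : ℂ) / (e.totient : ℂ) *
        ∑ b ∈ (Icc 1 e).filter (fun b => Nat.gcd b e = 1), psi ((b : ℚ) * m / e) := by
  have step1 : ∀ d ∈ q.divisors,
      ∑ a ∈ Icc 1 d, psi ((a : ℚ) * m / d) = if d ∣ m then (d : ℂ) else 0 := by
    intro d hd
    have hd0 : 0 < d := Nat.pos_of_mem_divisors hd
    have hd0' : (d : ℚ) ≠ 0 := Nat.cast_ne_zero.mpr hd0.ne'
    have key := sum_psi_Icc d hd0 ((m : ℚ) / d) ⟨(m : ℤ), by field_simp; norm_cast⟩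
    simp_rw [← mul_div_assoc] at key
    rw [key]
    refine if_congr ?_ rfl rfl
    constructor
    · rintro ⟨z, hz⟩
      have hz' : (m : ℚ) = z * d := by field_simp at hz; linear_combination hz
      have : (m : ℤ) = z * d := by exact_mod_cast hz'
      have : (d : ℤ) ∣ (m : ℤ) := Dvd.intro_left z this.symm
      exact_mod_cast this
    · rintro ⟨c, rfl⟩
      exact ⟨(c : ℤ), by push_cast; rw [mul_comm]; field_simp⟩
  have L1 : ∑ d ∈ q.divisors, (moebius d : ℂ) / (d : ℂ) * ∑ a ∈ Icc 1 d, psi ((a : ℚ) * m / d)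
      = if Nat.gcd m q = 1 then (1 : ℂ) else 0 := by
    rw [Finset.sum_congr rfl (fun d hd => by rw [step1 d hd]),
      ← moebius_coprime_sum q m hq0, Finset.sum_filter]
    refine Finset.sum_congr rfl fun d hd => ?_
    have hd0' : (d : ℂ) ≠ 0 := Nat.cast_ne_zero.mpr (Nat.pos_of_mem_divisors hd).ne'
    split
    · field_simp
    · simp
  rw [← L1, regroup q m hq0, Finset.mul_sum]
  refine Finset.sum_congr rfl fun e he => ?_
  rw [coeff_eq q e hq hq0 (Nat.dvd_of_mem_divisors he)]
  ring

lemma Efun_eq (h : ℕ) (x : ℚ) : Efun h x = ∑ j ∈ Icc 1 h, psi ((j : ℚ) * x) := by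
  unfold Efun psi
  refine Finset.sum_congr rfl fun j _ => ?_
  congr 1
  push_cast
  ring

lemma Efun_one (h : ℕ) : Efun h 1 = (h : ℂ) := by
  rw [Efun_eq]
  have : ∀ j ∈ Icc 1 h, psi ((j : ℚ) * 1) = 1 := fun j _ => by
    rw [mul_one, psi_nat]
  rw [Finset.sum_congr rfl this, Finset.sum_const, Nat.card_Icc]
  simp

lemma sum_Ico_psi (n h e b : ℕ) (hn : 1 ≤ n) (he : e ≠ 0) :
    ∑ m ∈ Ico n (n + h), psi ((b : ℚ) * m / e)
      = psi ((b : ℚ) * ((n - 1 : ℕ) : ℚ) / e) * Efun h ((b : ℚ) / e) := by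
  rw [Efun_eq, Finset.mul_sum, Finset.sum_Ico_eq_sum_range,
    show Icc 1 h = Ico 1 (h + 1) from rfl, Finset.sum_Ico_eq_sum_range]
  simp only [Nat.add_sub_cancel_left, Nat.add_sub_cancel]
  refine Finset.sum_congr rfl fun i _ => ?_
  rw [← psi_add]
  congr 1
  have h1 : ((n - 1 : ℕ) : ℚ) = (n : ℚ) - 1 := by
    have : (1 : ℕ) ≤ n := hn
    push_cast [Nat.cast_sub this]
    ring
  have he' : (e : ℚ) ≠ 0 := Nat.cast_ne_zero.mpr he
  rw [h1]
  push_cast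
  field_simp
  ring

lemma N_eq (q h : ℕ) (hq : Squarefree q) (hq0 : 0 < q) (n : ℕ) (hn : 1 ≤ n) :
    ((((Finset.Ico n (n + h)).filter (fun m => Nat.gcd m q = 1)).card : ℂ))
    = ((q.totient : ℂ) / (q : ℂ)) * ∑ e ∈ q.divisors, (moebius e : ℂ) / (e.totient : ℂ) *
        ∑ b ∈ (Icc 1 e).filter (fun b => Nat.gcd b e = 1),
          psi ((b : ℚ) * ((n - 1 : ℕ) : ℚ) / e) * Efun h ((b : ℚ) / e) := by
  have card_eq : ((((Finset.Ico n (n + h)).filter (fun m => Nat.gcd m q = 1)).card : ℂ))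
      = ∑ m ∈ Ico n (n + h), if Nat.gcd m q = 1 then (1 : ℂ) else 0 := by
    rw [Finset.card_filter]
    push_cast
    rfl
  rw [card_eq]
  rw [Finset.sum_congr rfl (fun m _ => indicator_eq q m hq hq0)]
  rw [← Finset.mul_sum, Finset.sum_comm]
  congr 1
  refine Finset.sum_congr rfl fun e he => ?_
  rw [← Finset.mul_sum, Finset.sum_comm]
  congr 1
  refine Finset.sum_congr rfl fun b hb => ?_
  exact sum_Ico_psi n h e b hn (Nat.pos_of_mem_divisors he).ne'

noncomputable def Gfun (h n e : ℕ) : ℂ :=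
  (moebius e : ℂ) / (e.totient : ℂ) *
    ∑ b ∈ (Icc 1 e).filter (fun b => Nat.gcd b e = 1),
      psi ((b : ℚ) * ((n - 1 : ℕ) : ℚ) / e) * Efun h ((b : ℚ) / e)

lemma Bsum_split (q h n : ℕ) (hq0 : 0 < q) :
    ∑ e ∈ q.divisors, Gfun h n e
      = ∑ e ∈ q.divisors.filter (fun e => 1 < e), Gfun h n e + (h : ℂ) := by
  rw [← Finset.sum_filter_add_sum_filter_not q.divisors (fun e => 1 < e)]
  congr 1
  have hone : q.divisors.filter (fun e => ¬ 1 < e) = {1} := by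
    ext e
    simp only [Finset.mem_filter, Nat.mem_divisors, Finset.mem_singleton, not_lt]
    constructor
    · rintro ⟨⟨hdvd, -⟩, hle⟩
      have : 0 < e := Nat.pos_of_dvd_of_pos hdvd hq0
      omega
    · rintro rfl
      exact ⟨⟨one_dvd q, hq0.ne'⟩, le_refl 1⟩
  rw [hone, Finset.sum_singleton]
  have hR : (Icc 1 1).filter (fun b => Nat.gcd b 1 = 1) = {1} := by
    ext b
    simp [Nat.gcd_one_right]
  rw [Gfun, hR, Finset.sum_singleton]
  have : ((1 : ℕ) : ℚ) * ((n - 1 : ℕ) : ℚ) / ((1 : ℕ) : ℚ) = ((n - 1 : ℕ) : ℚ) := by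
    push_cast; ring
  rw [this, psi_nat]
  have : ((1 : ℕ) : ℚ) / ((1 : ℕ) : ℚ) = 1 := by norm_num
  rw [this, Efun_one]
  simp [moebius_apply_one, Nat.totient_one]

lemma prod_expand (q h k₁ k₂ n : ℕ) :
    (∑ e ∈ q.divisors.filter (fun e => 1 < e), Gfun h n e) ^ k₁ *
      (∑ e ∈ q.divisors, Gfun h n e) ^ k₂
    = ∑ qs ∈ (Fintype.piFinset fun _ : Fin (k₁ + k₂) => q.divisors).filter
        (fun qs => ∀ i : Fin (k₁ + k₂), (i : ℕ) < k₁ → 1 < qs i),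
        ∏ i, Gfun h n (qs i) := by
  set D : Fin (k₁ + k₂) → Finset ℕ :=
    fun i => if (i : ℕ) < k₁ then q.divisors.filter (fun e => 1 < e) else q.divisors with hD
  have h1 : ∏ i, ∑ e ∈ D i, Gfun h n e
      = (∑ e ∈ q.divisors.filter (fun e => 1 < e), Gfun h n e) ^ k₁ *
        (∑ e ∈ q.divisors, Gfun h n e) ^ k₂ := by
    rw [Fin.prod_univ_add]
    congr 1
    · have hcast : ∀ i : Fin k₁, D (Fin.castAdd k₂ i) = q.divisors.filter (fun e => 1 < e) := by
        intro i
        simp [hD, Fin.coe_castAdd, i.isLt]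
      rw [Finset.prod_congr rfl (fun i _ => by rw [hcast i])]
      rw [Finset.prod_const, Finset.card_univ, Fintype.card_fin]
    · have hcast : ∀ i : Fin k₂, D (Fin.natAdd k₁ i) = q.divisors := by
        intro i
        simp [hD]
      rw [Finset.prod_congr rfl (fun i _ => by rw [hcast i])]
      rw [Finset.prod_const, Finset.card_univ, Fintype.card_fin]
  have h2 : Fintype.piFinset D
      = (Fintype.piFinset fun _ : Fin (k₁ + k₂) => q.divisors).filter
        (fun qs => ∀ i : Fin (k₁ + k₂), (i : ℕ) < k₁ → 1 < qs i) := by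
    ext qs
    simp only [Fintype.mem_piFinset, Finset.mem_filter, hD]
    constructor
    · intro hqs
      refine ⟨fun i => ?_, fun i hi => ?_⟩
      · have := hqs i
        split at this
        · exact (Finset.mem_filter.mp this).1
        · exact this
      · have := hqs i
        rw [if_pos hi] at this
        exact (Finset.mem_filter.mp this).2
    · rintro ⟨ha, hb⟩ i
      split
      · next hi => exact Finset.mem_filter.mpr ⟨ha i, hb i hi⟩
      · exact ha i
  rw [← h1, Finset.prod_univ_sum, h2]

lemma qs_inner_sum (q h : ℕ) (hq0 : 0 < q) {k : ℕ} (qs : Fin k → ℕ)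
    (hqs : ∀ i, qs i ∈ q.divisors) :
    ∑ n ∈ Icc 1 q, ∏ i, Gfun h n (qs i)
      = (q : ℂ) * ((∏ i, ((moebius (qs i) : ℂ) / ((qs i).totient : ℂ))) *
        ∑ a ∈ (Fintype.piFinset fun i => Icc 1 (qs i)).filter
            (fun a => (∀ i, Nat.gcd (a i) (qs i) = 1) ∧
              ∃ z : ℤ, ∑ i, (a i : ℚ) / (qs i : ℚ) = (z : ℚ)),
          ∏ i, Efun h ((a i : ℚ) / (qs i : ℚ))) := by
  have hqdvd : ∀ i, qs i ∣ q := fun i => Nat.dvd_of_mem_divisors (hqs i)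
  have hqpos : ∀ i, 0 < qs i := fun i => Nat.pos_of_mem_divisors (hqs i)
  -- step 1: expand the product over i for fixed n
  have step1 : ∀ n : ℕ, ∏ i, Gfun h n (qs i)
      = (∏ i, ((moebius (qs i) : ℂ) / ((qs i).totient : ℂ))) *
        ∑ a ∈ Fintype.piFinset (fun i => (Icc 1 (qs i)).filter (fun b => Nat.gcd b (qs i) = 1)),
          psi (((n - 1 : ℕ) : ℚ) * ∑ i, (a i : ℚ) / (qs i : ℚ)) *
            ∏ i, Efun h ((a i : ℚ) / (qs i : ℚ)) := by
    intro n
    unfold Gfun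
    rw [Finset.prod_mul_distrib]
    congr 1
    rw [Finset.prod_univ_sum]
    refine Finset.sum_congr rfl fun a ha => ?_
    rw [Finset.prod_mul_distrib]
    congr 1
    rw [← psi_sum]
    congr 1
    rw [Finset.mul_sum]
    refine Finset.sum_congr rfl fun i _ => ?_
    ring
  rw [Finset.sum_congr rfl (fun n _ => step1 n), ← Finset.mul_sum]
  conv_rhs => rw [mul_left_comm]
  congr 1
  -- now: ∑_a (∑_n psi((n-1) X a)) * ∏ E = q * ∑_{filtered} ∏ E
  have hXint : ∀ a : Fin k → ℕ,
      ∃ z : ℤ, (q : ℚ) * ∑ i, (a i : ℚ) / (qs i : ℚ) = (z : ℚ) := by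
    intro a
    refine ⟨(∑ i, (a i : ℤ) * ((q / qs i : ℕ) : ℤ)), ?_⟩
    rw [Finset.mul_sum, Int.cast_sum]
    refine Finset.sum_congr rfl fun i _ => ?_
    have hcd : ((q / qs i : ℕ) : ℚ) = (q : ℚ) / (qs i : ℚ) :=
      Nat.cast_div (hqdvd i) (Nat.cast_ne_zero.mpr (hqpos i).ne')
    rw [Int.cast_mul, Int.cast_natCast, Int.cast_natCast, hcd]
    ring
  have hsumn : ∀ a : Fin k → ℕ,
      ∑ n ∈ Icc 1 q, psi (((n - 1 : ℕ) : ℚ) * ∑ i, (a i : ℚ) / (qs i : ℚ))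
        = if ∃ z : ℤ, ∑ i, (a i : ℚ) / (qs i : ℚ) = (z : ℚ) then (q : ℂ) else 0 := by
    intro a
    rw [show Icc 1 q = Ico 1 (q + 1) from rfl, Finset.sum_Ico_eq_sum_range]
    simp only [Nat.add_sub_cancel, Nat.add_sub_cancel_left]
    rw [sum_psi_range q hq0 _ (hXint a)]
  have swap : ∑ a ∈ Fintype.piFinset (fun i => (Icc 1 (qs i)).filter
        (fun b => Nat.gcd b (qs i) = 1)),
      ∑ n ∈ Icc 1 q, psi (((n - 1 : ℕ) : ℚ) * ∑ i, (a i : ℚ) / (qs i : ℚ)) *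
        ∏ i, Efun h ((a i : ℚ) / (qs i : ℚ))
      = ∑ a ∈ Fintype.piFinset (fun i => (Icc 1 (qs i)).filter
          (fun b => Nat.gcd b (qs i) = 1)),
        (if ∃ z : ℤ, ∑ i, (a i : ℚ) / (qs i : ℚ) = (z : ℚ) then (q : ℂ) else 0) *
          ∏ i, Efun h ((a i : ℚ) / (qs i : ℚ)) := by
    refine Finset.sum_congr rfl fun a _ => ?_
    rw [← Finset.sum_mul, hsumn a]
  rw [Finset.sum_comm, swap]
  have hsets : (Fintype.piFinset (fun i => (Icc 1 (qs i)).filter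
        (fun b => Nat.gcd b (qs i) = 1))).filter
        (fun a => ∃ z : ℤ, ∑ i, (a i : ℚ) / (qs i : ℚ) = (z : ℚ))
      = (Fintype.piFinset fun i => Icc 1 (qs i)).filter
          (fun a => (∀ i, Nat.gcd (a i) (qs i) = 1) ∧
            ∃ z : ℤ, ∑ i, (a i : ℚ) / (qs i : ℚ) = (z : ℚ)) := by
    ext a
    simp only [Finset.mem_filter, Fintype.mem_piFinset]
    constructor
    · rintro ⟨h1, h2⟩
      exact ⟨fun i => (h1 i).1, fun i => (h1 i).2, h2⟩
    · rintro ⟨h1, h2, h3⟩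
      exact ⟨fun i => ⟨h1 i, h2 i⟩, h3⟩
  rw [Finset.mul_sum, ← hsets, Finset.sum_filter]
  refine Finset.sum_congr rfl fun a _ => ?_
  split
  · ring
  · ring

theorem Mkk_eq_Vkk (q h k₁ k₂ : ℕ) (hq : Squarefree q) (hq0 : 0 < q) (hh : 1 ≤ h) :
    (Mkk q h k₁ k₂ : ℂ) =
      (q : ℂ) * ((Nat.totient q : ℂ) / (q : ℂ)) ^ (k₁ + k₂) * Vkk q h k₁ k₂ := by
  rw [Mkk]
  push_cast
  have key : ∀ n ∈ Icc 1 q,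
      ((((Finset.Ico n (n + h)).filter (fun m => Nat.gcd m q = 1)).card : ℂ)
          - (q.totient : ℂ) / (q : ℂ) * (h : ℂ)) ^ k₁ *
        ((((Finset.Ico n (n + h)).filter (fun m => Nat.gcd m q = 1)).card : ℂ)) ^ k₂
      = ((q.totient : ℂ) / (q : ℂ)) ^ (k₁ + k₂) *
          ((∑ e ∈ q.divisors.filter (fun e => 1 < e), Gfun h n e) ^ k₁ *
            (∑ e ∈ q.divisors, Gfun h n e) ^ k₂) := by
    intro n hn
    have hn1 : 1 ≤ n := (Finset.mem_Icc.mp hn).1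
    have hN : ((((Finset.Ico n (n + h)).filter (fun m => Nat.gcd m q = 1)).card : ℂ))
        = ((q.totient : ℂ) / (q : ℂ)) * ∑ e ∈ q.divisors, Gfun h n e := by
      rw [N_eq q h hq hq0 n hn1]
      rfl
    have hsplit := Bsum_split q h n hq0
    rw [hN, hsplit]
    rw [show ((q.totient : ℂ) / (q : ℂ)) *
          (∑ e ∈ q.divisors.filter (fun e => 1 < e), Gfun h n e + (h : ℂ))
          - (q.totient : ℂ) / (q : ℂ) * (h : ℂ)
        = ((q.totient : ℂ) / (q : ℂ)) *
          ∑ e ∈ q.divisors.filter (fun e => 1 < e), Gfun h n e by ring]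
    rw [mul_pow, mul_pow, pow_add]
    ring
  rw [Finset.sum_congr rfl key, ← Finset.mul_sum]
  have expand : ∀ n ∈ Icc 1 q,
      (∑ e ∈ q.divisors.filter (fun e => 1 < e), Gfun h n e) ^ k₁ *
        (∑ e ∈ q.divisors, Gfun h n e) ^ k₂
      = ∑ qs ∈ (Fintype.piFinset fun _ : Fin (k₁ + k₂) => q.divisors).filter
          (fun qs => ∀ i : Fin (k₁ + k₂), (i : ℕ) < k₁ → 1 < qs i),
          ∏ i, Gfun h n (qs i) := fun n _ => prod_expand q h k₁ k₂ n
  rw [Finset.sum_congr rfl expand, Finset.sum_comm]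
  have hinner : ∀ qs ∈ (Fintype.piFinset fun _ : Fin (k₁ + k₂) => q.divisors).filter
      (fun qs => ∀ i : Fin (k₁ + k₂), (i : ℕ) < k₁ → 1 < qs i),
      ∑ n ∈ Icc 1 q, ∏ i, Gfun h n (qs i)
        = (q : ℂ) * ((∏ i, ((moebius (qs i) : ℂ) / ((qs i).totient : ℂ))) *
          ∑ a ∈ (Fintype.piFinset fun i => Icc 1 (qs i)).filter
              (fun a => (∀ i, Nat.gcd (a i) (qs i) = 1) ∧
                ∃ z : ℤ, ∑ i, (a i : ℚ) / (qs i : ℚ) = (z : ℚ)),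
            ∏ i, Efun h ((a i : ℚ) / (qs i : ℚ))) := by
    intro qs hqsmem
    have hqs : ∀ i, qs i ∈ q.divisors :=
      fun i => (Fintype.mem_piFinset.mp (Finset.mem_filter.mp hqsmem).1) i
    exact qs_inner_sum q h hq0 qs hqs
  rw [Finset.sum_congr rfl hinner, ← Finset.mul_sum, Vkk]
  ring
end

section
/- Let k ≥ 1 be an integer and let d_1,...,d_k be integers, D = (d_1,...,d_k). Then Σ_𝒫 w(𝒫)·Δ_𝒫(D), where the sum is over all set partitions 𝒫 of {1,...,k}, equals 1 if d_1,...,d_k are pairwise distinct and equals 0 otherwise. -/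
open scoped Classical

/-- `wP P = ∑_G (−1)^{e(G)}`, the sum being over all simple graphs `G` on
`{1,…,k}` whose connected components have vertex sets exactly the cells
of the partition `P`, where `e(G)` is the number of edges of `G`. -/
noncomputable def wP {k : ℕ} (P : Finpartition (Finset.univ : Finset (Fin k))) : ℤ :=
  ∑ G ∈ (Finset.univ : Finset (SimpleGraph (Fin k))).filter
      (fun G => ∀ i j : Fin k, G.Reachable i j ↔ ∃ S ∈ P.parts, i ∈ S ∧ j ∈ S),
    (-1 : ℤ) ^ G.edgeSet.ncard

section Aux

variable {α : Type*} [Fintype α] [DecidableEq α]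

open Finset

private lemma parts_subset_of_rel {P Q : Finpartition (univ : Finset α)}
    (h : ∀ i j : α, (∃ S ∈ P.parts, i ∈ S ∧ j ∈ S) → ∃ S ∈ Q.parts, i ∈ S ∧ j ∈ S)
    (h' : ∀ i j : α, (∃ S ∈ Q.parts, i ∈ S ∧ j ∈ S) → ∃ S ∈ P.parts, i ∈ S ∧ j ∈ S) :
    P.parts ⊆ Q.parts := by
  intro S hS
  obtain ⟨a, ha⟩ := P.nonempty_of_mem_parts hS
  have hSa : S = Q.part a := by
    ext x
    constructor
    · intro hx
      obtain ⟨T, hT, haT, hxT⟩ := h a x ⟨S, hS, ha, hx⟩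
      rw [Q.part_eq_of_mem hT haT]; exact hxT
    · intro hx
      obtain ⟨T, hT, haT, hxT⟩ := h' a x ⟨Q.part a, Q.part_mem.mpr (mem_univ a), Q.mem_part (mem_univ a), hx⟩
      rwa [P.eq_of_mem_parts hT hS haT ha] at hxT
  rw [hSa]; exact Q.part_mem.mpr (mem_univ a)

private lemma finpartition_ext {P Q : Finpartition (univ : Finset α)}
    (h : ∀ i j : α, (∃ S ∈ P.parts, i ∈ S ∧ j ∈ S) ↔ ∃ S ∈ Q.parts, i ∈ S ∧ j ∈ S) :
    P = Q := by
  have h1 := parts_subset_of_rel (fun i j => (h i j).1) (fun i j => (h i j).2)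
  have h2 := parts_subset_of_rel (fun i j => (h i j).2) (fun i j => (h i j).1)
  exact Finpartition.ext (Finset.Subset.antisymm h1 h2)

private lemma mem_same_part_ofSetoid (s : Setoid α) [DecidableRel s.r] (i j : α) :
    (∃ S ∈ (Finpartition.ofSetoid s).parts, i ∈ S ∧ j ∈ S) ↔ s.r i j := by
  constructor
  · rintro ⟨S, hS, hiS, hjS⟩
    rw [← (Finpartition.ofSetoid s).part_eq_of_mem hS hiS] at hjS
    exact Finpartition.mem_part_ofSetoid_iff_rel.mp hjS
  · intro hr
    exact ⟨(Finpartition.ofSetoid s).part i,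
      (Finpartition.ofSetoid s).part_mem.mpr (mem_univ i),
      (Finpartition.ofSetoid s).mem_part (mem_univ i),
      Finpartition.mem_part_ofSetoid_iff_rel.mpr hr⟩

end Aux

/-- The connected-component partition of a graph. -/
noncomputable def compPart {k : ℕ} (G : SimpleGraph (Fin k)) :
    Finpartition (Finset.univ : Finset (Fin k)) :=
  Finpartition.ofSetoid G.reachableSetoid

lemma compPart_spec {k : ℕ} (G : SimpleGraph (Fin k)) (i j : Fin k) :
    (∃ S ∈ (compPart G).parts, i ∈ S ∧ j ∈ S) ↔ G.Reachable i j :=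
  mem_same_part_ofSetoid G.reachableSetoid i j

lemma reach_congr {k : ℕ} {G : SimpleGraph (Fin k)} {d : Fin k → ℤ}
    (h : ∀ i j : Fin k, G.Adj i j → d i = d j) {i j : Fin k} (hr : G.Reachable i j) :
    d i = d j := by
  rw [SimpleGraph.reachable_iff_reflTransGen] at hr
  induction hr with
  | refl => rfl
  | tail _ hadj ih => exact ih.trans (h _ _ hadj)

lemma filter_cond_iff {k : ℕ} (G : SimpleGraph (Fin k))
    (P : Finpartition (Finset.univ : Finset (Fin k))) :
    (∀ i j : Fin k, G.Reachable i j ↔ ∃ S ∈ P.parts, i ∈ S ∧ j ∈ S) ↔ P = compPart G := by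
  constructor
  · intro h
    exact finpartition_ext (fun i j => ((h i j).symm.trans (compPart_spec G i j).symm))
  · rintro rfl i j
    exact (compPart_spec G i j).symm

theorem sum_wP_indicator (k : ℕ) (hk : 1 ≤ k) (d : Fin k → ℤ) :
    ∑ P : Finpartition (Finset.univ : Finset (Fin k)),
      (wP P : ℤ) * (if ∀ S ∈ P.parts, ∀ i ∈ S, ∀ j ∈ S, d i = d j then 1 else 0)
    = if Function.Injective d then 1 else 0 := by
  classical
  set H : SimpleGraph (Fin k) := SimpleGraph.fromRel (fun i j => d i = d j) with hH
  -- Step 1: collapse the double sum over partitions and graphs into a sum over graphs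
  have step1 : ∑ P : Finpartition (Finset.univ : Finset (Fin k)),
      (wP P : ℤ) * (if ∀ S ∈ P.parts, ∀ i ∈ S, ∀ j ∈ S, d i = d j then 1 else 0)
      = ∑ G : SimpleGraph (Fin k), (-1 : ℤ) ^ G.edgeSet.ncard *
          (if ∀ S ∈ (compPart G).parts, ∀ i ∈ S, ∀ j ∈ S, d i = d j then 1 else 0) := by
    rw [← Finset.sum_fiberwise (Finset.univ : Finset (SimpleGraph (Fin k))) compPart
      (fun G => (-1 : ℤ) ^ G.edgeSet.ncard *
        (if ∀ S ∈ (compPart G).parts, ∀ i ∈ S, ∀ j ∈ S, d i = d j then 1 else 0))]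
    refine Finset.sum_congr rfl fun P _ => ?_
    rw [wP, Finset.sum_mul]
    have hfilter : (Finset.univ : Finset (SimpleGraph (Fin k))).filter
        (fun G => ∀ i j : Fin k, G.Reachable i j ↔ ∃ S ∈ P.parts, i ∈ S ∧ j ∈ S)
        = (Finset.univ : Finset (SimpleGraph (Fin k))).filter (fun G => compPart G = P) := by
      refine Finset.filter_congr fun G _ => ?_
      rw [filter_cond_iff]
      exact ⟨fun h => h.symm, fun h => h.symm⟩
    rw [hfilter]
    refine Finset.sum_congr rfl fun G hG => ?_
    rw [(Finset.mem_filter.mp hG).2]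
  rw [step1]
  -- Step 2: the indicator condition is equivalent to G ≤ H
  have step2 : ∀ G : SimpleGraph (Fin k),
      (∀ S ∈ (compPart G).parts, ∀ i ∈ S, ∀ j ∈ S, d i = d j) ↔ G ≤ H := by
    intro G
    constructor
    · intro h i j hij
      have := (compPart_spec G i j).mpr hij.reachable
      obtain ⟨S, hS, hiS, hjS⟩ := this
      exact ⟨hij.ne, Or.inl (h S hS i hiS j hjS)⟩
    · intro h S hS i hiS j hjS
      have hreach : G.Reachable i j := (compPart_spec G i j).mp ⟨S, hS, hiS, hjS⟩
      refine reach_congr (fun a b hab => ?_) hreach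
      rcases (h hab).2 with h' | h'
      · exact h'
      · exact h'.symm
  simp only [step2]
  -- Step 3: sum over graphs ≤ H via subsets of edges of H
  have step3 : ∑ G : SimpleGraph (Fin k), (-1 : ℤ) ^ G.edgeSet.ncard *
      (if G ≤ H then 1 else 0)
      = ∑ E ∈ H.edgeFinset.powerset, (-1 : ℤ) ^ E.card := by
    simp only [mul_ite, mul_one, mul_zero, ← Finset.sum_filter]
    refine Finset.sum_nbij' (i := fun G => G.edgeFinset)
      (j := fun E => SimpleGraph.fromEdgeSet ↑E) ?_ ?_ ?_ ?_ ?_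
    · intro G hG
      rw [Finset.mem_powerset]
      exact SimpleGraph.edgeFinset_mono (Finset.mem_filter.mp hG).2
    · intro E hE
      rw [Finset.mem_filter]
      refine ⟨Finset.mem_univ _, ?_⟩
      have : (E : Set (Sym2 (Fin k))) ⊆ H.edgeSet := by
        rw [← SimpleGraph.coe_edgeFinset]
        exact_mod_cast Finset.mem_powerset.mp hE
      calc SimpleGraph.fromEdgeSet ↑E ≤ SimpleGraph.fromEdgeSet H.edgeSet :=
            SimpleGraph.fromEdgeSet_mono this
        _ = H := SimpleGraph.fromEdgeSet_edgeSet H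
    · intro G _
      show SimpleGraph.fromEdgeSet ↑G.edgeFinset = G
      rw [SimpleGraph.coe_edgeFinset, SimpleGraph.fromEdgeSet_edgeSet]
    · intro E hE
      have hsub : (E : Set (Sym2 (Fin k))) ⊆ H.edgeSet := by
        rw [← SimpleGraph.coe_edgeFinset]
        exact_mod_cast Finset.mem_powerset.mp hE
      have hes : (SimpleGraph.fromEdgeSet (↑E : Set (Sym2 (Fin k)))).edgeSet = ↑E := by
        rw [SimpleGraph.edgeSet_fromEdgeSet]
        ext e
        simp only [Set.mem_diff, Set.mem_setOf_eq, and_iff_left_iff_imp]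
        intro he
        exact H.not_isDiag_of_mem_edgeSet (hsub he)
      apply Finset.coe_injective
      rw [SimpleGraph.coe_edgeFinset, hes]
    · intro G _
      show (-1 : ℤ) ^ G.edgeSet.ncard = (-1 : ℤ) ^ G.edgeFinset.card
      rw [← SimpleGraph.coe_edgeFinset, Set.ncard_coe_finset]
  rw [step3, Finset.sum_powerset_neg_one_pow_card]
  -- Step 4: H has no edges iff d is injective
  congr 1
  simp only [eq_iff_iff]
  rw [SimpleGraph.edgeFinset_eq_empty]
  constructor
  · intro hbot i j hij
    by_contra hne
    have : H.Adj i j := ⟨hne, Or.inl hij⟩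
    rw [hbot] at this
    exact this
  · intro hinj
    ext i j
    simp only [SimpleGraph.fromRel_adj, SimpleGraph.bot_adj, iff_false, not_and, hH]
    intro hne h
    rcases h with h | h
    · exact hne (hinj h)
    · exact hne (hinj h.symm)
end

section
/- There exists a constant c > 0 such that for all integers n, Q with 1 ≤ n ≤ Q, the number of 6-tuples (a_1,a_2,a_3,q_1,q_2,q_3) of integers with |a_i| ≤ n, 1 ≤ q_i ≤ Q and gcd(a_i,q_i) = 1 for i = 1,2,3, and a_1/q_1 + a_2/q_2 + a_3/q_3 = 0, is at least c·n²·Q. -/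
open Finset

def Acop (N q : ℕ) : Finset ℕ := (Finset.Icc 1 N).filter (fun a => Nat.Coprime a q)


lemma aux_sum_inv_sq (n : ℕ) : ∑ k ∈ Finset.Icc 2 n, (1:ℝ)/(k:ℝ)^2 ≤ 7/10 := by
  have key : ∀ m : ℕ, 3 ≤ m → ∑ k ∈ Finset.Icc 2 m, (1:ℝ)/(k:ℝ)^2 ≤ 25/36 - 1/(m:ℝ) := by
    intro m hm
    induction m, hm using Nat.le_induction with
    | base =>
      have : Finset.Icc 2 3 = {2, 3} := by decide
      rw [this]; norm_num
    | succ m hm ih =>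
      rw [Finset.sum_Icc_succ_top (by omega : 2 ≤ m + 1)]
      have hm0 : (0:ℝ) < (m:ℝ) := by positivity
      have hm1 : (0:ℝ) < (m:ℝ) + 1 := by positivity
      have h1 : (1:ℝ)/((m:ℝ)+1)^2 ≤ 1/(m:ℝ) - 1/((m:ℝ)+1) := by
        rw [div_sub_div _ _ (ne_of_gt hm0) (ne_of_gt hm1)]
        rw [div_le_div_iff₀ (by positivity) (by positivity)]
        ring_nf
        nlinarith
      push_cast
      linarith
  rcases le_or_gt n 2 with h | h
  · interval_cases n <;> simp <;> norm_num
  · have := key n (by omega)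
    have : (0:ℝ) < (n:ℝ) := by positivity
    have h2 : (0:ℝ) < 1/(n:ℝ) := by positivity
    linarith



lemma Acop_lower (N q : ℕ) :
    (N : ℝ) - ∑ k ∈ Finset.Icc 2 N, (if k ∣ q then ((N / k : ℕ) : ℝ) else 0)
      ≤ ((Acop N q).card : ℝ) := by
  have hsub : (Finset.Icc 1 N).filter (fun a => ¬ Nat.Coprime a q) ⊆
      ((Finset.Icc 2 N).filter (· ∣ q)).biUnion (fun k => (Finset.Icc 1 N).filter (k ∣ ·)) := by
    intro a ha
    simp only [Finset.mem_filter, Finset.mem_Icc] at ha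
    obtain ⟨⟨ha1, ha2⟩, hnc⟩ := ha
    have hg0 : 0 < Nat.gcd a q := Nat.gcd_pos_of_pos_left _ (by omega)
    have hgne : Nat.gcd a q ≠ 1 := hnc
    have hgle : Nat.gcd a q ≤ N :=
      le_trans (Nat.le_of_dvd (by omega) (Nat.gcd_dvd_left a q)) ha2
    refine Finset.mem_biUnion.2 ⟨Nat.gcd a q, ?_, ?_⟩
    · simp only [Finset.mem_filter, Finset.mem_Icc]
      exact ⟨⟨by omega, hgle⟩, Nat.gcd_dvd_right a q⟩
    · exact Finset.mem_filter.2 ⟨Finset.mem_Icc.2 ⟨ha1, ha2⟩, Nat.gcd_dvd_left a q⟩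
  have hdvdcard : ∀ k : ℕ, ((Finset.Icc 1 N).filter (k ∣ ·)).card = N / k := by
    intro k
    rw [show Finset.Icc 1 N = Finset.Ioc 0 N from (Finset.Icc_add_one_left_eq_Ioc 0 N)]
    exact Nat.Ioc_filter_dvd_card_eq_div N k
  have hcard : ((Finset.Icc 1 N).filter (fun a => ¬ Nat.Coprime a q)).card
      ≤ ∑ k ∈ Finset.Icc 2 N, (if k ∣ q then N / k else 0) := by
    calc ((Finset.Icc 1 N).filter (fun a => ¬ Nat.Coprime a q)).card
        ≤ (((Finset.Icc 2 N).filter (· ∣ q)).biUnion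
            (fun k => (Finset.Icc 1 N).filter (k ∣ ·))).card := Finset.card_le_card hsub
      _ ≤ ∑ k ∈ (Finset.Icc 2 N).filter (· ∣ q), ((Finset.Icc 1 N).filter (k ∣ ·)).card :=
          Finset.card_biUnion_le
      _ = ∑ k ∈ (Finset.Icc 2 N).filter (· ∣ q), N / k := by
          exact Finset.sum_congr rfl fun k _ => hdvdcard k
      _ = ∑ k ∈ Finset.Icc 2 N, (if k ∣ q then N / k else 0) := by
          rw [Finset.sum_filter]
  have hsplit : (Acop N q).card + ((Finset.Icc 1 N).filter (fun a => ¬ Nat.Coprime a q)).card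
      = N := by
    rw [Acop, Finset.card_filter_add_card_filter_not]
    · simp [Nat.card_Icc]
  have hreal : (((Finset.Icc 1 N).filter (fun a => ¬ Nat.Coprime a q)).card : ℝ)
      ≤ ∑ k ∈ Finset.Icc 2 N, (if k ∣ q then ((N / k : ℕ) : ℝ) else 0) := by
    calc (((Finset.Icc 1 N).filter (fun a => ¬ Nat.Coprime a q)).card : ℝ)
        ≤ ((∑ k ∈ Finset.Icc 2 N, (if k ∣ q then N / k else 0) : ℕ) : ℝ) := by
          exact_mod_cast hcard
      _ = ∑ k ∈ Finset.Icc 2 N, (if k ∣ q then ((N / k : ℕ) : ℝ) else 0) := by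
          push_cast [apply_ite (Nat.cast : ℕ → ℝ)]
          rfl
  have := hsplit
  have h2 : ((Acop N q).card : ℝ) + (((Finset.Icc 1 N).filter (fun a => ¬ Nat.Coprime a q)).card : ℝ) = N := by exact_mod_cast this
  linarith

lemma sum_Acop (N Q : ℕ) :
    (3/10 : ℝ) * N * Q ≤ ∑ q ∈ Finset.Icc 1 Q, ((Acop N q).card : ℝ) := by
  have hdvdcard : ∀ k : ℕ, ((Finset.Icc 1 Q).filter (k ∣ ·)).card = Q / k := by
    intro k
    rw [show Finset.Icc 1 Q = Finset.Ioc 0 Q from (Finset.Icc_add_one_left_eq_Ioc 0 Q)]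
    exact Nat.Ioc_filter_dvd_card_eq_div Q k
  have step1 : ∑ q ∈ Finset.Icc 1 Q,
      ((N : ℝ) - ∑ k ∈ Finset.Icc 2 N, (if k ∣ q then ((N / k : ℕ) : ℝ) else 0))
      ≤ ∑ q ∈ Finset.Icc 1 Q, ((Acop N q).card : ℝ) :=
    Finset.sum_le_sum fun q _ => Acop_lower N q
  have swap : ∑ q ∈ Finset.Icc 1 Q, ∑ k ∈ Finset.Icc 2 N,
      (if k ∣ q then ((N / k : ℕ) : ℝ) else 0)
      = ∑ k ∈ Finset.Icc 2 N, ((N / k : ℕ) : ℝ) * ((Q / k : ℕ) : ℝ) := by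
    rw [Finset.sum_comm]
    refine Finset.sum_congr rfl fun k _ => ?_
    rw [← Finset.sum_filter, Finset.sum_const, hdvdcard k, nsmul_eq_mul, mul_comm]
  have bound : ∑ k ∈ Finset.Icc 2 N, ((N / k : ℕ) : ℝ) * ((Q / k : ℕ) : ℝ)
      ≤ (7/10 : ℝ) * N * Q := by
    calc ∑ k ∈ Finset.Icc 2 N, ((N / k : ℕ) : ℝ) * ((Q / k : ℕ) : ℝ)
        ≤ ∑ k ∈ Finset.Icc 2 N, ((N:ℝ)/(k:ℝ)) * ((Q:ℝ)/(k:ℝ)) := by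
          refine Finset.sum_le_sum fun k hk => ?_
          have h1 : ((N / k : ℕ) : ℝ) ≤ (N:ℝ)/(k:ℝ) := Nat.cast_div_le
          have h2 : ((Q / k : ℕ) : ℝ) ≤ (Q:ℝ)/(k:ℝ) := Nat.cast_div_le
          have h3 : (0:ℝ) ≤ ((N / k : ℕ) : ℝ) := by positivity
          have h4 : (0:ℝ) ≤ ((Q / k : ℕ) : ℝ) := by positivity
          have h5 : (0:ℝ) ≤ (N:ℝ)/(k:ℝ) := by positivity
          nlinarith
      _ = (N:ℝ) * (Q:ℝ) * ∑ k ∈ Finset.Icc 2 N, (1:ℝ)/(k:ℝ)^2 := by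
          rw [Finset.mul_sum]
          refine Finset.sum_congr rfl fun k hk => ?_
          have hk2 : 2 ≤ k := (Finset.mem_Icc.1 hk).1
          have : (k:ℝ) ≠ 0 := by positivity
          field_simp
      _ ≤ (N:ℝ) * (Q:ℝ) * (7/10) := by
          have h := aux_sum_inv_sq N
          have : (0:ℝ) ≤ (N:ℝ) * (Q:ℝ) := by positivity
          nlinarith
      _ = (7/10 : ℝ) * N * Q := by ring
  have hsumN : ∑ q ∈ Finset.Icc 1 Q, (N : ℝ) = (Q:ℝ) * N := by
    rw [Finset.sum_const, Nat.card_Icc, nsmul_eq_mul]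
    push_cast
    ring
  rw [Finset.sum_sub_distrib, hsumN, swap] at step1
  linarith

noncomputable def solMap (x : (_ : ℕ) × ℕ × ℕ) : (Fin 3 → ℤ) × (Fin 3 → ℤ) :=
  (![(x.2.1 : ℤ), -(x.2.2 : ℤ),
      -(((x.2.1 : ℤ) - (x.2.2 : ℤ)) / (Int.gcd ((x.2.1 : ℤ) - (x.2.2 : ℤ)) (x.1 : ℤ) : ℤ))],
   ![(x.1 : ℤ), (x.1 : ℤ),
      (x.1 : ℤ) / (Int.gcd ((x.2.1 : ℤ) - (x.2.2 : ℤ)) (x.1 : ℤ) : ℤ)])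


theorem lower_bound_three_fractions :
    ∃ c : ℝ, 0 < c ∧ ∀ n Q : ℤ, 1 ≤ n → n ≤ Q →
      c * (n : ℝ) ^ 2 * (Q : ℝ) ≤
        (Set.ncard {aq : (Fin 3 → ℤ) × (Fin 3 → ℤ) |
          (∀ i, |aq.1 i| ≤ n ∧ 1 ≤ aq.2 i ∧ aq.2 i ≤ Q ∧ Int.gcd (aq.1 i) (aq.2 i) = 1) ∧
          ∑ i, (aq.1 i : ℚ) / (aq.2 i : ℚ) = 0} : ℝ) := by
  refine ⟨9/100, by norm_num, fun n Q hn hQ => ?_⟩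
  set S := {aq : (Fin 3 → ℤ) × (Fin 3 → ℤ) |
          (∀ i, |aq.1 i| ≤ n ∧ 1 ≤ aq.2 i ∧ aq.2 i ≤ Q ∧ Int.gcd (aq.1 i) (aq.2 i) = 1) ∧
          ∑ i, (aq.1 i : ℚ) / (aq.2 i : ℚ) = 0} with hS
  set N := n.toNat with hNdef
  set QQ := Q.toNat with hQdef
  have hNc : (N : ℤ) = n := Int.toNat_of_nonneg (by omega)
  have hQc : (QQ : ℤ) = Q := Int.toNat_of_nonneg (by omega)
  have hN1 : 1 ≤ N := by omega
  have hQ1 : 1 ≤ QQ := by omega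
  -- the domain
  set D : Finset ((_ : ℕ) × ℕ × ℕ) :=
    (Finset.Icc 1 QQ).sigma (fun q => (Acop N q) ×ˢ (Acop N q)) with hD
  -- S is finite
  have hSfin : S.Finite := by
    have hbox : ((Set.univ.pi fun _ : Fin 3 => Set.Icc (-n) n) ×ˢ
        (Set.univ.pi fun _ : Fin 3 => Set.Icc (1:ℤ) Q)).Finite :=
      (Set.Finite.pi fun _ => Set.finite_Icc _ _).prod
        (Set.Finite.pi fun _ => Set.finite_Icc _ _)
    refine hbox.subset ?_
    rintro ⟨a, q⟩ ⟨h1, _⟩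
    constructor
    · intro i _
      have := (h1 i).1
      simp only [Set.mem_Icc]
      exact abs_le.1 this
    · intro i _
      have := h1 i
      simp only [Set.mem_Icc]
      exact ⟨this.2.1, this.2.2.1⟩
  -- mapping property
  have hmaps : ∀ x ∈ D, solMap x ∈ S := by
    rintro ⟨q, a₁, a₂⟩ hx
    simp only [hD, Finset.mem_sigma, Finset.mem_product, Acop, Finset.mem_filter,
      Finset.mem_Icc] at hx
    obtain ⟨⟨hq1, hq2⟩, ⟨⟨ha11, ha12⟩, hcop1⟩, ⟨ha21, ha22⟩, hcop2⟩ := hx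
    set d : ℤ := (a₁ : ℤ) - (a₂ : ℤ) with hd
    set g : ℤ := (Int.gcd d (q : ℤ) : ℤ) with hg
    have hqpos : (0:ℤ) < (q:ℤ) := by exact_mod_cast hq1
    have hgcdpos : 0 < Int.gcd d (q : ℤ) := Int.gcd_pos_of_ne_zero_right d (by positivity)
    have hgpos : (0:ℤ) < g := by rw [hg]; exact_mod_cast hgcdpos
    have hgdvd_d : g ∣ d := Int.gcd_dvd_left d (q : ℤ)
    have hgdvd_q : g ∣ (q:ℤ) := Int.gcd_dvd_right d (q : ℤ)
    have hq3pos : (1:ℤ) ≤ (q:ℤ) / g := by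
      obtain ⟨e, he⟩ := hgdvd_q
      have he' : (q:ℤ) / g = e := by rw [he, Int.mul_ediv_cancel_left _ (ne_of_gt hgpos)]
      rw [he']
      nlinarith
    have hq3le : (q:ℤ) / g ≤ Q := le_trans (Int.ediv_le_self g (le_of_lt hqpos))
      (by exact_mod_cast le_trans (by exact_mod_cast hq2) (le_of_eq hQc))
    have hqleQ : (q:ℤ) ≤ Q := by rw [← hQc]; exact_mod_cast hq2
    have ha1n : (a₁:ℤ) ≤ n := by rw [← hNc]; exact_mod_cast ha12
    have ha2n : (a₂:ℤ) ≤ n := by rw [← hNc]; exact_mod_cast ha22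
    have ha1p : (1:ℤ) ≤ (a₁:ℤ) := by exact_mod_cast ha11
    have ha2p : (1:ℤ) ≤ (a₂:ℤ) := by exact_mod_cast ha21
    have hdn : |d| ≤ n := by rw [hd, abs_le]; omega
    have hsol : solMap ⟨q, a₁, a₂⟩ = (![(a₁:ℤ), -(a₂:ℤ), -(d / g)], ![(q:ℤ), (q:ℤ), (q:ℤ) / g]) :=
      rfl
    rw [hS]
    simp only [Set.mem_setOf_eq, hsol]
    constructor
    · intro i
      fin_cases i <;>
        simp only [Fin.zero_eta, Fin.mk_one, Fin.isValue, Matrix.cons_val_zero,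
          Matrix.cons_val_one, Matrix.head_cons, Matrix.cons_val_two, Matrix.tail_cons]
      · refine ⟨?_, by exact_mod_cast hq1, hqleQ, by exact_mod_cast hcop1⟩
        rw [abs_of_nonneg (by positivity)]; exact ha1n
      · refine ⟨?_, by exact_mod_cast hq1, hqleQ, ?_⟩
        · rw [abs_neg, abs_of_nonneg (by positivity)]; exact ha2n
        · rw [Int.neg_gcd]; exact_mod_cast hcop2
      · refine ⟨?_, hq3pos, hq3le, ?_⟩
        · show |(-(d / g))| ≤ n
          rw [abs_neg]
          exact le_trans (Int.abs_ediv_le_abs d g) hdn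
        · show Int.gcd (-(d / g)) ((q:ℤ) / g) = 1
          rw [Int.neg_gcd, hg]
          exact Int.gcd_div_gcd_div_gcd hgcdpos
    · rw [Fin.sum_univ_three]
      simp only [Matrix.cons_val_zero, Matrix.cons_val_one, Matrix.head_cons,
        Matrix.cons_val_two, Matrix.tail_cons]
      push_cast [Int.cast_div_charZero hgdvd_d, Int.cast_div_charZero hgdvd_q]
      have hqQ : ((q:ℤ):ℚ) ≠ 0 := by exact_mod_cast ne_of_gt hqpos
      have hgQ : ((g:ℤ):ℚ) ≠ 0 := by exact_mod_cast ne_of_gt hgpos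
      have hqQ' : ((q:ℕ):ℚ) ≠ 0 := by exact_mod_cast hqQ
      field_simp
      rw [hd]
      push_cast
      ring
  have hinj : Set.InjOn solMap ↑D := by
    rintro ⟨q, a₁, a₂⟩ _ ⟨q', b₁, b₂⟩ _ h
    have hA := congrArg Prod.fst h
    have hB := congrArg Prod.snd h
    have e1 : ((a₁:ℤ)) = (b₁:ℤ) := by simpa [solMap] using congrFun hA 0
    have e2 : (-(a₂:ℤ)) = (-(b₂:ℤ)) := by simpa [solMap] using congrFun hA 1
    have e3 : ((q:ℤ)) = (q':ℤ) := by simpa [solMap] using congrFun hB 0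
    have q1 : q = q' := by exact_mod_cast e3
    have q2 : a₁ = b₁ := by exact_mod_cast e1
    have q3 : a₂ = b₂ := by
      have := neg_injective e2
      exact_mod_cast this
    subst q1; subst q2; subst q3; rfl
  have himg : (solMap '' ↑D).ncard = D.card := by
    rw [Set.ncard_image_of_injOn hinj, Set.ncard_coe_finset]
  have hle : (D.card : ℝ) ≤ (S.ncard : ℝ) := by
    have hsub : (solMap '' ↑D) ⊆ S := by
      rintro _ ⟨x, hx, rfl⟩
      exact hmaps x hx
    have := Set.ncard_le_ncard hsub hSfin
    rw [himg] at this
    exact_mod_cast this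
  have hcardD : (D.card : ℝ) = ∑ q ∈ Finset.Icc 1 QQ, ((Acop N q).card : ℝ)^2 := by
    rw [hD, Finset.card_sigma]
    push_cast
    refine Finset.sum_congr rfl fun q _ => ?_
    rw [Finset.card_product]
    push_cast; ring
  have hCS := Finset.sum_mul_sq_le_sq_mul_sq (Finset.Icc 1 QQ) (fun _ => (1:ℝ))
    (fun q => ((Acop N q).card : ℝ))
  have hQcard : ∑ _q ∈ Finset.Icc 1 QQ, (1:ℝ)^2 = (QQ:ℝ) := by
    simp [Nat.card_Icc]
  have hsum := sum_Acop N QQ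
  simp only [one_mul, one_pow] at hCS
  rw [Finset.sum_const, Nat.card_Icc, Nat.add_sub_cancel, nsmul_eq_mul, mul_one] at hCS
  have hQQpos : (0:ℝ) < (QQ:ℝ) := by exact_mod_cast hQ1
  have hNpos : (0:ℝ) ≤ (N:ℝ) := by positivity
  have hfinal : (9/100 : ℝ) * (N:ℝ)^2 * (QQ:ℝ) ≤ ∑ q ∈ Finset.Icc 1 QQ, ((Acop N q).card : ℝ)^2 := by
    have hsq : ((3/10 : ℝ) * N * QQ)^2 ≤ (∑ q ∈ Finset.Icc 1 QQ, ((Acop N q).card : ℝ))^2 := by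
      have h0 : (0:ℝ) ≤ (3/10 : ℝ) * N * QQ := by positivity
      exact pow_le_pow_left₀ h0 hsum 2
    have := le_trans hsq hCS
    nlinarith [this, hQQpos]
  have hNn : (N:ℝ) = (n:ℝ) := by exact_mod_cast congrArg (Int.cast : ℤ → ℝ) hNc
  have hQn : (QQ:ℝ) = (Q:ℝ) := by exact_mod_cast congrArg (Int.cast : ℤ → ℝ) hQc
  calc (9/100 : ℝ) * (n:ℝ)^2 * (Q:ℝ) = (9/100 : ℝ) * (N:ℝ)^2 * (QQ:ℝ) := by
        rw [hNn, hQn]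
    _ ≤ ∑ q ∈ Finset.Icc 1 QQ, ((Acop N q).card : ℝ)^2 := hfinal
    _ = (D.card : ℝ) := hcardD.symm
    _ ≤ (S.ncard : ℝ) := hle
end
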